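/- arXiv:2506.17979 — 4 statements merged into one kernel-verified Lean document; each statement's English description precedes it below -/
import Mathlib

section
/- Let m ≥ 0 and R > 0. Then there exists a constant c ∈ (0, 1] such that for all x, y ∈ ℝᵈ with ‖x‖ ≤ R one has c · Ψ(m^{1/α}‖y‖) ≤ Ψ(m^{1/α}‖x − y‖) ≤ c^{−1} · Ψ(m^{1/α}‖y‖). -/
/-- `I(r) = ∫₀^∞ s^{(d+α)/2 − 1} e^{−s/4 − r²/s} ds`. -/
noncomputable def Ifun (d : ℕ) (α : ℝ) (r : ℝ) : ℝ :=
  ∫ s in Set.Ioi (0 : ℝ), s ^ (((d : ℝ) + α) / 2 - 1) * Real.exp (-(s / 4) - r ^ 2 / s)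

/-- `Ψ(r) = I(r)/I(0)`. -/
noncomputable def Psi (d : ℕ) (α : ℝ) (r : ℝ) : ℝ := Ifun d α r / Ifun d α 0

open MeasureTheory Set

namespace Stmt12

noncomputable def f (β r s : ℝ) : ℝ := s ^ (β - 1) * Real.exp (-(s / 4) - r ^ 2 / s)

noncomputable def J (β r : ℝ) : ℝ := ∫ s in Set.Ioi (0 : ℝ), f β r s

lemma f_pos {β r s : ℝ} (hs : 0 < s) : 0 < f β r s :=
  mul_pos (Real.rpow_pos_of_pos hs _) (Real.exp_pos _)

lemma f_continuousOn (β r : ℝ) : ContinuousOn (f β r) (Ioi 0) := by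
  apply ContinuousOn.mul
  · exact fun s hs => (Real.continuousAt_rpow_const s _ (Or.inl (ne_of_gt hs))).continuousWithinAt
  · apply Real.continuous_exp.comp_continuousOn
    apply ContinuousOn.sub
    · exact (continuous_id.div_const 4).neg.continuousOn
    · exact continuousOn_const.div continuousOn_id fun s hs => ne_of_gt hs

lemma f_integrableOn {β : ℝ} (hβ : 0 < β) (r : ℝ) : IntegrableOn (f β r) (Ioi 0) := by
  have hmaj : IntegrableOn (fun s : ℝ => s ^ (β - 1) * Real.exp (-(1/4) * s ^ (1:ℝ)))
      (Ioi 0) := integrableOn_rpow_mul_exp_neg_mul_rpow (by linarith) (by norm_num) (by norm_num)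
  apply Integrable.mono' hmaj ((f_continuousOn β r).aestronglyMeasurable measurableSet_Ioi)
  filter_upwards [ae_restrict_mem measurableSet_Ioi] with s hs
  rw [Real.norm_eq_abs, abs_of_nonneg (f_pos hs).le]
  unfold f
  rw [Real.rpow_one]
  apply mul_le_mul_of_nonneg_left _ (Real.rpow_nonneg hs.le _)
  apply Real.exp_le_exp.2
  have h1 : 0 ≤ r ^ 2 / s := div_nonneg (sq_nonneg r) hs.le
  have := (show (0:ℝ) < s from hs).le
  nlinarith

lemma J_pos {β : ℝ} (hβ : 0 < β) (r : ℝ) : 0 < J β r := by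
  have hnn : 0 ≤ᶠ[ae (volume.restrict (Ioi (0:ℝ)))] f β r := by
    filter_upwards [ae_restrict_mem measurableSet_Ioi] with s hs
    exact (f_pos hs).le
  rw [J, setIntegral_pos_iff_support_of_nonneg_ae hnn (f_integrableOn hβ r)]
  have hsub : Ioi (0:ℝ) ⊆ Function.support (f β r) ∩ Ioi 0 :=
    fun s hs => ⟨ne_of_gt (f_pos hs), hs⟩
  refine lt_of_lt_of_le ?_ (measure_mono hsub)
  rw [Real.volume_Ioi]
  exact ENNReal.zero_lt_top

lemma J_anti {β : ℝ} (hβ : 0 < β) {r₁ r₂ : ℝ} (h1 : 0 ≤ r₁) (h12 : r₁ ≤ r₂) :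
    J β r₂ ≤ J β r₁ := by
  apply setIntegral_mono_on (f_integrableOn hβ r₂) (f_integrableOn hβ r₁) measurableSet_Ioi
  intro s hs
  unfold f
  apply mul_le_mul_of_nonneg_left _ (Real.rpow_nonneg (le_of_lt hs) _)
  apply Real.exp_le_exp.2
  have hss : (0:ℝ) < s := hs
  have h2 : r₁ ^ 2 ≤ r₂ ^ 2 := by nlinarith
  have : r₁ ^ 2 / s ≤ r₂ ^ 2 / s := by gcongr
  linarith

end Stmt12
namespace Stmt12

lemma rpow_integrableOn {β : ℝ} (hβ : 0 < β) (T : ℝ) (hT : 0 ≤ T) (C : ℝ) :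
    IntegrableOn (fun s : ℝ => C * s ^ (β - 1)) (Ioc 0 T) := by
  have := (intervalIntegrable_iff_integrableOn_Ioc_of_le hT).mp
    ((intervalIntegral.intervalIntegrable_rpow' (by linarith : (-1:ℝ) < β - 1)
      (a := 0) (b := T)).const_mul C)
  exact this

lemma integral_rpow_Ioc {β : ℝ} (hβ : 0 < β) {T : ℝ} (hT : 0 ≤ T) :
    ∫ s in Ioc (0:ℝ) T, s ^ (β - 1) = T ^ β / β := by
  rw [← intervalIntegral.integral_of_le hT,
    integral_rpow (Or.inl (by linarith : (-1:ℝ) < β - 1))]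
  rw [Real.zero_rpow (by linarith : β - 1 + 1 ≠ 0)]
  ring_nf

/-- Upper bound for the near part of the integral, `r ≥ 1`. -/
lemma upper_piece {β : ℝ} (hβ : 0 < β) {r : ℝ} (hr : 1 ≤ r) :
    ∫ s in Ioc (0:ℝ) (r+1), f β r s ≤
      Real.exp (-((r+1)/4 + r^2/(r+1))) * ((r+1) ^ β / β) := by
  have h0r : (0:ℝ) ≤ r + 1 := by linarith
  have key : ∀ s ∈ Ioc (0:ℝ) (r+1),
      f β r s ≤ Real.exp (-((r+1)/4 + r^2/(r+1))) * s ^ (β - 1) := by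
    intro s hs
    obtain ⟨hs0, hs1⟩ := hs
    rw [f, mul_comm (Real.exp _)]
    apply mul_le_mul_of_nonneg_left _ (Real.rpow_nonneg hs0.le _)
    apply Real.exp_le_exp.2
    have hr1 : (0:ℝ) < r + 1 := by linarith
    have hkey : s / 4 + r ^ 2 / s - ((r+1)/4 + r^2/(r+1)) =
        (r + 1 - s) * (4 * r^2 - s * (r+1)) / (4 * s * (r+1)) := by
      field_simp
      ring
    have h1 : (0:ℝ) ≤ r + 1 - s := by linarith
    have h2 : (0:ℝ) ≤ 4 * r^2 - s * (r+1) := by nlinarith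
    have h3 : (0:ℝ) < 4 * s * (r+1) := by positivity
    have : (0:ℝ) ≤ s / 4 + r ^ 2 / s - ((r+1)/4 + r^2/(r+1)) := by
      rw [hkey]; positivity
    linarith
  calc ∫ s in Ioc (0:ℝ) (r+1), f β r s
      ≤ ∫ s in Ioc (0:ℝ) (r+1), Real.exp (-((r+1)/4 + r^2/(r+1))) * s ^ (β-1) :=
        setIntegral_mono_on ((f_integrableOn hβ r).mono_set Ioc_subset_Ioi_self)
          (rpow_integrableOn hβ _ h0r _) measurableSet_Ioc key
    _ = Real.exp (-((r+1)/4 + r^2/(r+1))) * ∫ s in Ioc (0:ℝ) (r+1), s ^ (β-1) :=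
        integral_const_mul _ _
    _ = Real.exp (-((r+1)/4 + r^2/(r+1))) * ((r+1) ^ β / β) := by
        rw [integral_rpow_Ioc hβ h0r]

end Stmt12
namespace Stmt12

/-- Lower bound for the far part of the integral via a window `(2r, 2r+1]`, `r ≥ 1`. -/
lemma window_piece {β : ℝ} (hβ : 0 < β) {r : ℝ} (hr : 1 ≤ r) :
    Real.exp (-(r + 1/4)) * (2*r+1) ^ (-|β-1|) ≤ ∫ s in Ioi (r+1:ℝ), f β r s := by
  have h2r : (0:ℝ) < 2*r := by linarith
  have h2r1 : (1:ℝ) ≤ 2*r+1 := by linarith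
  have hsub : Ioc (2*r) (2*r+1) ⊆ Ioi (r+1) := fun s hs => by
    simp only [mem_Ioc, mem_Ioi] at *
    linarith [hs.1]
  have hpt : ∀ s ∈ Ioc (2*r) (2*r+1),
      Real.exp (-(r + 1/4)) * (2*r+1) ^ (-|β-1|) ≤ f β r s := by
    intro s hs
    obtain ⟨hs0, hs1⟩ := hs
    have hspos : (0:ℝ) < s := by linarith
    rw [f, mul_comm (s ^ (β-1))]
    have hexp : Real.exp (-(r + 1/4)) ≤ Real.exp (-(s / 4) - r ^ 2 / s) := by
      apply Real.exp_le_exp.2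
      have h1 : s / 4 ≤ (2*r+1)/4 := by linarith
      have h2 : r ^ 2 / s ≤ r / 2 := by
        rw [div_le_iff₀ hspos]; nlinarith
      linarith
    have hpow : (2*r+1:ℝ) ^ (-|β-1|) ≤ s ^ (β-1) := by
      rcases le_total 1 β with h | h
      · have e1 : (1:ℝ) ≤ s ^ (β-1) :=
          Real.one_le_rpow (by linarith) (by linarith)
        have e2 : (2*r+1:ℝ) ^ (-|β-1|) ≤ 1 :=
          Real.rpow_le_one_of_one_le_of_nonpos h2r1 (neg_nonpos.mpr (abs_nonneg _))
        linarith
      · have habs : -|β-1| = β - 1 := by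
          rw [abs_of_nonpos (by linarith)]; ring
        rw [habs]
        exact Real.rpow_le_rpow_of_nonpos hspos (by linarith) (by linarith)
    calc Real.exp (-(r + 1/4)) * (2*r+1) ^ (-|β-1|)
        ≤ Real.exp (-(s / 4) - r ^ 2 / s) * (2*r+1) ^ (-|β-1|) := by
          apply mul_le_mul_of_nonneg_right hexp (Real.rpow_nonneg (by linarith) _)
      _ ≤ Real.exp (-(s / 4) - r ^ 2 / s) * s ^ (β-1) := by
          apply mul_le_mul_of_nonneg_left hpow (Real.exp_pos _).le
  have hmeas : volume (Ioc (2*r) (2*r+1)) = ENNReal.ofReal 1 := by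
    rw [Real.volume_Ioc]; norm_num
  have step1 : Real.exp (-(r + 1/4)) * (2*r+1) ^ (-|β-1|) ≤
      ∫ s in Ioc (2*r) (2*r+1), f β r s := by
    have := setIntegral_ge_of_const_le_real (μ := volume) measurableSet_Ioc
      (by rw [hmeas]; exact ENNReal.ofReal_ne_top) hpt
      ((f_integrableOn hβ r).mono_set (fun s hs => lt_trans h2r hs.1))
    rw [Measure.real, hmeas] at this
    simpa using this
  refine le_trans step1 (setIntegral_mono_set ((f_integrableOn hβ r).mono_set
    (fun s hs => lt_trans (by linarith : (0:ℝ) < r+1) hs)) ?_ ?_)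
  · filter_upwards [ae_restrict_mem measurableSet_Ioi] with s hs
    exact (f_pos (lt_trans (by linarith) hs)).le
  · exact HasSubset.Subset.eventuallyLE hsub

end Stmt12
namespace Stmt12

/-- The near-part upper bound is dominated by the window lower bound, uniformly in `r ≥ 1`. -/
lemma poly_bound {β : ℝ} (hβ : 0 < β) : ∃ K : ℝ, 0 < K ∧ ∀ r : ℝ, 1 ≤ r →
    Real.exp (-((r+1)/4 + r^2/(r+1))) * ((r+1) ^ β / β) ≤
      K * (Real.exp (-(r + 1/4)) * (2*r+1) ^ (-|β-1|)) := by
  set n : ℕ := ⌈β + |β-1|⌉₊ with hn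
  refine ⟨Real.exp 1 * (3^n * 4^n * (n.factorial : ℝ)) / β, by positivity, fun r hr => ?_⟩
  have h2r1 : (0:ℝ) < 2*r+1 := by linarith
  have hr1 : (0:ℝ) < r + 1 := by linarith
  -- polynomial bound
  have main : (r+1) ^ β * (2*r+1) ^ |β-1| ≤ (3^n * 4^n * (n.factorial:ℝ)) * Real.exp (r/4) := by
    have h1 : (r+1:ℝ) ^ β ≤ (2*r+1) ^ β :=
      Real.rpow_le_rpow hr1.le (by linarith) hβ.le
    have h2 : (2*r+1:ℝ) ^ β * (2*r+1) ^ |β-1| = (2*r+1) ^ (β + |β-1|) :=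
      (Real.rpow_add h2r1 _ _).symm
    have h3 : (2*r+1:ℝ) ^ (β + |β-1|) ≤ (2*r+1) ^ (n:ℝ) :=
      Real.rpow_le_rpow_of_exponent_le (by linarith) (Nat.le_ceil _)
    have h4 : (2*r+1:ℝ) ^ (n:ℝ) = (2*r+1) ^ n := Real.rpow_natCast _ n
    have h5 : (2*r+1:ℝ) ^ n ≤ (3*r) ^ n :=
      pow_le_pow_left₀ h2r1.le (by linarith) n
    have h6 : (3*r:ℝ) ^ n = 3^n * r^n := mul_pow 3 r n
    have h7 : (r:ℝ)^n ≤ 4^n * (n.factorial:ℝ) * Real.exp (r/4) := by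
      have := Real.pow_div_factorial_le_exp (x := r/4) (by linarith) n
      have hfac : (0:ℝ) < (n.factorial : ℝ) := by positivity
      rw [div_pow, div_div, div_le_iff₀ (by positivity)] at this
      calc (r:ℝ)^n = r^n := rfl
        _ ≤ Real.exp (r/4) * (4^n * n.factorial) := this
        _ = 4^n * (n.factorial:ℝ) * Real.exp (r/4) := by ring
    calc (r+1) ^ β * (2*r+1) ^ |β-1|
        ≤ (2*r+1) ^ β * (2*r+1) ^ |β-1| := by
          apply mul_le_mul_of_nonneg_right h1 (Real.rpow_nonneg h2r1.le _)
      _ = (2*r+1) ^ (β + |β-1|) := h2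
      _ ≤ (2*r+1) ^ (n:ℝ) := h3
      _ = (2*r+1) ^ n := h4
      _ ≤ (3*r)^n := h5
      _ = 3^n * r^n := h6
      _ ≤ 3^n * (4^n * (n.factorial:ℝ) * Real.exp (r/4)) := by
          apply mul_le_mul_of_nonneg_left h7 (by positivity)
      _ = (3^n * 4^n * (n.factorial:ℝ)) * Real.exp (r/4) := by ring
  -- exponential comparison
  have expo : Real.exp (r/4) * Real.exp (-((r+1)/4 + r^2/(r+1))) ≤
      Real.exp 1 * Real.exp (-(r + 1/4)) := by
    rw [← Real.exp_add, ← Real.exp_add]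
    apply Real.exp_le_exp.2
    have hq : r^2/(r+1) = r - r/(r+1) := by field_simp; ring
    have hq2 : r/(r+1) ≤ 1 := by rw [div_le_one hr1]; linarith
    rw [hq]
    linarith
  -- assemble
  have lhs_eq : Real.exp (-((r+1)/4 + r^2/(r+1))) * ((r+1) ^ β / β) =
      ((r+1) ^ β * (2*r+1) ^ |β-1|) * Real.exp (-((r+1)/4 + r^2/(r+1))) *
        (2*r+1) ^ (-|β-1|) / β := by
    rw [Real.rpow_neg h2r1.le]
    have hne : ((2*r+1:ℝ) ^ |β-1|) ≠ 0 := ne_of_gt (Real.rpow_pos_of_pos h2r1 _)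
    field_simp
  rw [lhs_eq]
  have hpow_nn : (0:ℝ) ≤ (2*r+1) ^ (-|β-1|) := Real.rpow_nonneg h2r1.le _
  calc ((r+1) ^ β * (2*r+1) ^ |β-1|) * Real.exp (-((r+1)/4 + r^2/(r+1))) *
        (2*r+1) ^ (-|β-1|) / β
      ≤ ((3^n * 4^n * (n.factorial:ℝ)) * Real.exp (r/4)) *
          Real.exp (-((r+1)/4 + r^2/(r+1))) * (2*r+1) ^ (-|β-1|) / β := by
        gcongr
    _ = (3^n * 4^n * (n.factorial:ℝ)) *
          (Real.exp (r/4) * Real.exp (-((r+1)/4 + r^2/(r+1)))) *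
          (2*r+1) ^ (-|β-1|) / β := by ring
    _ ≤ (3^n * 4^n * (n.factorial:ℝ)) * (Real.exp 1 * Real.exp (-(r + 1/4))) *
          (2*r+1) ^ (-|β-1|) / β := by
        gcongr
    _ = Real.exp 1 * (3^n * 4^n * (n.factorial : ℝ)) / β *
          (Real.exp (-(r + 1/4)) * (2*r+1) ^ (-|β-1|)) := by ring

end Stmt12
namespace Stmt12

lemma J_shift {β : ℝ} (hβ : 0 < β) {b : ℝ} (hb : 0 ≤ b) :
    ∃ c : ℝ, 0 < c ∧ c ≤ 1 ∧ ∀ r : ℝ, 0 ≤ r → c * J β r ≤ J β (r + b) := by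
  obtain ⟨K, hK, hKr⟩ := poly_bound hβ
  set c₁ : ℝ := J β (1+b) / J β 0 with hc₁
  set c₂ : ℝ := Real.exp (-(2*b + b^2)) / (K + 1) with hc₂
  have hJ0 : 0 < J β 0 := J_pos hβ 0
  have hc₁pos : 0 < c₁ := div_pos (J_pos hβ _) hJ0
  have hc₁le : c₁ ≤ 1 := by
    rw [hc₁, div_le_one hJ0]
    exact J_anti hβ le_rfl (by linarith)
  have hc₂pos : 0 < c₂ := div_pos (Real.exp_pos _) (by linarith)
  refine ⟨min c₁ c₂, lt_min hc₁pos hc₂pos, le_trans (min_le_left _ _) hc₁le,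
    fun r hr => ?_⟩
  rcases le_total r 1 with hcase | hcase
  · -- small r
    have h1 : J β (1 + b) ≤ J β (r + b) := J_anti hβ (by linarith) (by linarith)
    have h2 : J β r ≤ J β 0 := J_anti hβ le_rfl hr
    calc min c₁ c₂ * J β r ≤ c₁ * J β 0 := by
          apply mul_le_mul (min_le_left _ _) h2 (le_of_lt (J_pos hβ r)) hc₁pos.le
      _ = J β (1+b) := by rw [hc₁]; field_simp
      _ ≤ J β (r + b) := h1
  · -- large r
    set A : ℝ := ∫ s in Ioc (0:ℝ) (r+1), f β r s with hA
    set B : ℝ := ∫ s in Ioi (r+1:ℝ), f β r s with hB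
    have hsplit : J β r = A + B := by
      rw [J, hA, hB, ← setIntegral_union (Ioc_disjoint_Ioi le_rfl) measurableSet_Ioi
        ((f_integrableOn hβ r).mono_set Ioc_subset_Ioi_self)
        ((f_integrableOn hβ r).mono_set (fun s hs => lt_trans (by linarith : (0:ℝ) < r+1) hs)),
        Ioc_union_Ioi_eq_Ioi (by linarith : (0:ℝ) ≤ r+1)]
    have hAB : A ≤ K * B := by
      calc A ≤ Real.exp (-((r+1)/4 + r^2/(r+1))) * ((r+1) ^ β / β) := upper_piece hβ hcase
        _ ≤ K * (Real.exp (-(r + 1/4)) * (2*r+1) ^ (-|β-1|)) := hKr r hcase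
        _ ≤ K * B := by
            apply mul_le_mul_of_nonneg_left (window_piece hβ hcase) hK.le
    have hBpos : 0 < B := by
      have := window_piece hβ hcase
      have hpos : 0 < Real.exp (-(r + 1/4)) * (2*r+1) ^ (-|β-1|) :=
        mul_pos (Real.exp_pos _) (Real.rpow_pos_of_pos (by linarith) _)
      linarith
    have hJr : J β r ≤ (K + 1) * B := by rw [hsplit]; nlinarith
    -- shifted integral lower bound
    have hshift : Real.exp (-(2*b + b^2)) * B ≤ J β (r + b) := by
      have hpt : ∀ s ∈ Ioi (r+1:ℝ),
          Real.exp (-(2*b + b^2)) * f β r s ≤ f β (r+b) s := by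
        intro s hs
        have hs' : r + 1 < s := hs
        have hspos : (0:ℝ) < s := by linarith
        rw [f, f]
        rw [mul_comm (Real.exp (-(2*b+b^2))), mul_assoc]
        apply mul_le_mul_of_nonneg_left _ (Real.rpow_nonneg hspos.le _)
        rw [← Real.exp_add]
        apply Real.exp_le_exp.2
        have hdiv : ((r+b)^2 - r^2) / s ≤ 2*b + b^2 := by
          rw [div_le_iff₀ hspos]
          nlinarith
        have hsub : (r+b)^2 / s - r^2/s = ((r+b)^2 - r^2)/s := (sub_div _ _ _).symm
        linarith [hsub, hdiv]
      calc Real.exp (-(2*b + b^2)) * B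
          = ∫ s in Ioi (r+1:ℝ), Real.exp (-(2*b + b^2)) * f β r s := by
            rw [hB, integral_const_mul]
        _ ≤ ∫ s in Ioi (r+1:ℝ), f β (r+b) s := by
            apply setIntegral_mono_on
              (((f_integrableOn hβ r).mono_set
                (fun s hs => lt_trans (by linarith) hs)).const_mul _)
              ((f_integrableOn hβ (r+b)).mono_set
                (fun s hs => lt_trans (by linarith) hs))
              measurableSet_Ioi hpt
        _ ≤ J β (r + b) := by
            rw [J]
            apply setIntegral_mono_set (f_integrableOn hβ (r+b))
            · filter_upwards [ae_restrict_mem measurableSet_Ioi] with s hs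
              exact (f_pos hs).le
            · exact HasSubset.Subset.eventuallyLE
                (fun s hs => lt_trans (by linarith : (0:ℝ) < r+1) hs)
    calc min c₁ c₂ * J β r ≤ c₂ * J β r := by
          apply mul_le_mul_of_nonneg_right (min_le_right _ _) (J_pos hβ r).le
      _ ≤ c₂ * ((K+1) * B) := mul_le_mul_of_nonneg_left hJr hc₂pos.le
      _ = Real.exp (-(2*b + b^2)) * B := by
          rw [hc₂]; field_simp
      _ ≤ J β (r + b) := hshift

end Stmt12

namespace Stmt12

lemma Ifun_eq (d : ℕ) (α r : ℝ) : Ifun d α r = J (((d : ℝ) + α) / 2) r := rfl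

end Stmt12

/-- Let `m ≥ 0` and `R > 0`. There is `c ∈ (0,1]` such that for all
`x, y ∈ ℝᵈ` with `‖x‖ ≤ R`,
`c · Ψ(m^{1/α}‖y‖) ≤ Ψ(m^{1/α}‖x − y‖) ≤ c⁻¹ · Ψ(m^{1/α}‖y‖)`. -/
theorem stmt_12 (d : ℕ) (hd : 1 ≤ d) (α : ℝ) (hα : 0 < α) (hα2 : α < 2)
    (m : ℝ) (hm : 0 ≤ m) (R : ℝ) (hR : 0 < R) :
    ∃ c : ℝ, 0 < c ∧ c ≤ 1 ∧ ∀ x y : EuclideanSpace ℝ (Fin d), ‖x‖ ≤ R →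
      c * Psi d α (m ^ (1 / α) * ‖y‖) ≤ Psi d α (m ^ (1 / α) * ‖x - y‖) ∧
      Psi d α (m ^ (1 / α) * ‖x - y‖) ≤ c⁻¹ * Psi d α (m ^ (1 / α) * ‖y‖) := by
  classical
  set β : ℝ := ((d : ℝ) + α) / 2 with hβdef
  have hβ : 0 < β := by
    have : (1:ℝ) ≤ (d:ℝ) := by exact_mod_cast hd
    rw [hβdef]; linarith
  set a : ℝ := m ^ (1 / α) with ha
  have ha0 : 0 ≤ a := Real.rpow_nonneg hm _
  set b : ℝ := a * R with hb
  have hb0 : 0 ≤ b := mul_nonneg ha0 hR.le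
  obtain ⟨c, hc0, hc1, hcJ⟩ := Stmt12.J_shift hβ hb0
  have hJ0 : 0 < Stmt12.J β 0 := Stmt12.J_pos hβ 0
  -- key: for 0 ≤ u, 0 ≤ v, v ≤ u + b we get c * J u ≤ J v
  have key : ∀ u v : ℝ, 0 ≤ u → 0 ≤ v → v ≤ u + b → c * Stmt12.J β u ≤ Stmt12.J β v :=
    fun u v hu hv huv => le_trans (hcJ u hu) (Stmt12.J_anti hβ hv huv)
  refine ⟨c, hc0, hc1, fun x y hx => ?_⟩
  have h1 : a * ‖x - y‖ ≤ a * ‖y‖ + b := by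
    have := norm_sub_le x y
    have h' : ‖x - y‖ ≤ ‖y‖ + R := by
      calc ‖x - y‖ ≤ ‖x‖ + ‖y‖ := norm_sub_le x y
        _ ≤ ‖y‖ + R := by linarith
    calc a * ‖x - y‖ ≤ a * (‖y‖ + R) := mul_le_mul_of_nonneg_left h' ha0
      _ = a * ‖y‖ + b := by rw [hb]; ring
  have h2 : a * ‖y‖ ≤ a * ‖x - y‖ + b := by
    have hyv : y = x - (x - y) := by abel
    have h' : ‖y‖ ≤ ‖x - y‖ + R := by
      calc ‖y‖ = ‖x - (x - y)‖ := by rw [← hyv]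
        _ ≤ ‖x‖ + ‖x - y‖ := norm_sub_le x (x - y)
        _ ≤ ‖x - y‖ + R := by linarith
    calc a * ‖y‖ ≤ a * (‖x - y‖ + R) := mul_le_mul_of_nonneg_left h' ha0
      _ = a * ‖x - y‖ + b := by rw [hb]; ring
  have hu1 : 0 ≤ a * ‖y‖ := mul_nonneg ha0 (norm_nonneg _)
  have hu2 : 0 ≤ a * ‖x - y‖ := mul_nonneg ha0 (norm_nonneg _)
  have k1 : c * Stmt12.J β (a * ‖y‖) ≤ Stmt12.J β (a * ‖x - y‖) :=
    key _ _ hu1 hu2 h1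
  have k2 : c * Stmt12.J β (a * ‖x - y‖) ≤ Stmt12.J β (a * ‖y‖) :=
    key _ _ hu2 hu1 h2
  have hPsi : ∀ t : ℝ, Psi d α t = Stmt12.J β t / Stmt12.J β 0 := fun t => by
    rw [Psi, Stmt12.Ifun_eq, Stmt12.Ifun_eq]
  constructor
  · rw [hPsi, hPsi, ← mul_div_assoc, div_le_div_iff_of_pos_right hJ0]
    exact k1
  · have h3 : Stmt12.J β (a * ‖x - y‖) ≤ c⁻¹ * Stmt12.J β (a * ‖y‖) :=
      (le_inv_mul_iff₀ hc0).mpr k2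
    rw [hPsi, hPsi, ← mul_div_assoc]
    exact (div_le_div_iff_of_pos_right hJ0).mpr h3
end

section
/- Let m ≥ 0 and let U, V ⊆ ℝᵈ satisfy sup_{z∈U} ‖z‖ < ∞ and inf{‖x − y‖ : x ∈ U, y ∈ ℝᵈ∖V} > 0. Then there exists C₂ > 0 such that for every x ∈ U and every y ∈ ℝᵈ∖V: Ψ(m^{1/α}‖x − y‖) · max(1, ‖y‖^{d+α}) ≤ C₂ · Ψ(m^{1/α}‖y‖) · ‖x − y‖^{d+α} (equivalently, Ψ(m^{1/α}‖x−y‖)/‖x−y‖^{d+α} ≤ C₂ Ψ(m^{1/α}‖y‖) min(1, ‖y‖^{−(d+α)}) whenever y ≠ 0). -/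
open MeasureTheory Real Set
open scoped ENNReal NNReal

lemma base_integrable {b : ℝ} (hb : -1 < b) :
    IntegrableOn (fun s : ℝ => s ^ b * Real.exp (-(s/4))) (Set.Ioi 0) := by
  have := integrableOn_rpow_mul_exp_neg_mul_rpow (p := 1) (s := b) (b := 1/4) hb zero_lt_one (by norm_num)
  refine this.congr_fun (fun s hs => ?_) measurableSet_Ioi
  simp only [Real.rpow_one]
  ring_nf

lemma main_integrable {b : ℝ} (hb : 0 < b) (r : ℝ) :
    IntegrableOn (fun s : ℝ => s ^ (b - 1) * Real.exp (-(s/4) - r^2/s)) (Set.Ioi 0) := by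
  have hbase := base_integrable (b := b - 1) (by linarith)
  refine hbase.mono' ?_ ?_
  · apply Measurable.aestronglyMeasurable
    fun_prop
  · filter_upwards [ae_restrict_mem measurableSet_Ioi] with s hs
    simp only [Set.mem_Ioi] at hs
    rw [Real.norm_eq_abs, abs_mul, abs_of_nonneg (Real.rpow_nonneg hs.le _),
      abs_of_nonneg (Real.exp_nonneg _)]
    have h2 : 0 ≤ r^2/s := div_nonneg (sq_nonneg r) hs.le
    gcongr
    linarith

lemma exp_neg_le_quad {x : ℝ} (hx : 0 < x) : Real.exp (-x) ≤ 4 / x ^ 2 := by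
  have h1 : x / 2 + 1 ≤ Real.exp (x / 2) := by
    have := Real.add_one_le_exp (x / 2); linarith
  have hex : Real.exp x = Real.exp (x / 2) * Real.exp (x / 2) := by
    rw [← Real.exp_add]; ring_nf
  have h2 : x ^ 2 / 4 ≤ Real.exp x := by nlinarith [Real.exp_pos (x / 2)]
  rw [Real.exp_neg]
  rw [inv_eq_one_div, div_le_div_iff₀ (Real.exp_pos x) (pow_pos hx 2)]
  nlinarith

lemma aux_integrable {b : ℝ} (hb : 0 < b) {r : ℝ} (hr : 0 < r) :
    IntegrableOn (fun s : ℝ => s ^ (b - 2) * Real.exp (-(s/4) - r^2/s)) (Set.Ioi 0) := by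
  have hbase := (base_integrable (b := b) (by linarith)).const_mul (4 / r^4)
  refine hbase.mono' ?_ ?_
  · apply Measurable.aestronglyMeasurable; fun_prop
  · filter_upwards [ae_restrict_mem measurableSet_Ioi] with s hs
    simp only [Set.mem_Ioi] at hs
    have e1 : Real.exp (-(s/4) - r^2/s) = Real.exp (-(s/4)) * Real.exp (-(r^2/s)) := by
      rw [← Real.exp_add]; ring_nf
    have e2 : Real.exp (-(r^2/s)) ≤ 4/(r^2/s)^2 :=
      exp_neg_le_quad (div_pos (pow_pos hr 2) hs)
    have e3 : 4/(r^2/s)^2 = 4/r^4 * s^2 := by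
      field_simp
    have e4 : s ^ (b-2) * s ^ (2:ℝ) = s ^ b := by
      rw [← Real.rpow_add hs]; ring_nf
    have e5 : s ^ (2:ℝ) = s ^ 2 := by
      rw [show (2:ℝ) = ((2:ℕ):ℝ) by norm_num, Real.rpow_natCast]
    rw [Real.norm_eq_abs, abs_mul, abs_of_nonneg (Real.rpow_nonneg hs.le _),
      abs_of_nonneg (Real.exp_nonneg _), e1]
    calc s ^ (b-2) * (Real.exp (-(s/4)) * Real.exp (-(r^2/s)))
        ≤ s ^ (b-2) * (Real.exp (-(s/4)) * (4/r^4 * s^2)) := by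
          gcongr
          exact le_trans e2 (le_of_eq e3)
      _ = 4/r^4 * (s ^ b * Real.exp (-(s/4))) := by
          rw [← e4, e5]; ring

lemma I_pos {b : ℝ} (hb : 0 < b) (r : ℝ) :
    0 < ∫ s in Set.Ioi (0:ℝ), s ^ (b-1) * Real.exp (-(s/4) - r^2/s) := by
  refine (setIntegral_pos_iff_support_of_nonneg_ae ?_ ?_).mpr ?_
  · filter_upwards [ae_restrict_mem measurableSet_Ioi] with s hs
    simp only [Set.mem_Ioi] at hs
    positivity
  · exact main_integrable hb r
  · have hsub : Set.Ioi (1:ℝ) ⊆ (Function.support fun s => s ^ (b-1) * Real.exp (-(s/4) - r^2/s)) ∩ Set.Ioi 0 := by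
      intro s hs
      simp only [Set.mem_Ioi] at hs
      constructor
      · simp only [Function.mem_support]
        positivity
      · simp only [Set.mem_Ioi]; linarith
    calc (0:ℝ≥0∞) < volume (Set.Ioi (1:ℝ)) := by simp
      _ ≤ _ := measure_mono hsub

lemma I_anti {b : ℝ} (hb : 0 < b) {r r' : ℝ} (h0 : 0 ≤ r) (h : r ≤ r') :
    ∫ s in Set.Ioi (0:ℝ), s ^ (b-1) * Real.exp (-(s/4) - r'^2/s) ≤
    ∫ s in Set.Ioi (0:ℝ), s ^ (b-1) * Real.exp (-(s/4) - r^2/s) := by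
  refine setIntegral_mono_on (main_integrable hb r') (main_integrable hb r) measurableSet_Ioi ?_
  intro s hs
  simp only [Set.mem_Ioi] at hs
  have h2 : r^2 ≤ r'^2 := by nlinarith
  have h3 : r^2/s ≤ r'^2/s := by gcongr
  gcongr
  all_goals first | exact Real.rpow_nonneg hs.le _ | linarith

lemma I_cont {b : ℝ} (hb : 0 < b) :
    Continuous fun r : ℝ => ∫ s in Set.Ioi (0:ℝ), s ^ (b-1) * Real.exp (-(s/4) - r^2/s) := by
  rw [continuous_iff_continuousAt]
  intro r₀
  apply continuousAt_of_dominated (bound := fun s => s ^ (b-1) * Real.exp (-(s/4)))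
  · filter_upwards with r
    apply Measurable.aestronglyMeasurable; fun_prop
  · filter_upwards with r
    filter_upwards [ae_restrict_mem measurableSet_Ioi] with s hs
    simp only [Set.mem_Ioi] at hs
    rw [Real.norm_eq_abs, abs_mul, abs_of_nonneg (Real.rpow_nonneg hs.le _),
      abs_of_nonneg (Real.exp_nonneg _)]
    have h2 : 0 ≤ r^2/s := div_nonneg (sq_nonneg r) hs.le
    gcongr
    linarith
  · exact base_integrable (by linarith)
  · filter_upwards [ae_restrict_mem measurableSet_Ioi] with s hs
    apply Continuous.continuousAt; fun_prop

lemma bracket_nonneg {b r u : ℝ} (hb : 1/2 < b) (hr : 0 < r) (hu : 0 < u) (hu2 : u < 2*r) :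
    0 ≤ u ^ (b-2) * (u - r) + 4*r^2/u^2 * ((4*r^2/u) ^ (b-2) * (4*r^2/u - r)) := by
  set p : ℝ := 2*b - 1 with hp
  have hppos : 0 < p := by simp only [hp]; linarith
  have h2r : (0:ℝ) < 2*r := by linarith
  -- core inequality in terms of rpow with exponent p
  have hA : u ^ p ≤ (2*r) ^ p := Real.rpow_le_rpow hu.le hu2.le hppos.le
  have hM : (0:ℝ) < (2*r) ^ p := Real.rpow_pos_of_pos h2r p
  have hN : (0:ℝ) ≤ u ^ p := Real.rpow_nonneg hu.le p
  have hB : (4*r^2) ^ (b-1) = (2*r) ^ p / (2*r) := by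
    have h1 : (4*r^2 : ℝ) = (2*r)^2 := by ring
    rw [h1, ← Real.rpow_natCast (2*r) 2, ← Real.rpow_mul h2r.le,
      show ((2:ℕ):ℝ)*(b-1) = p - 1 by push_cast [hp]; ring,
      Real.rpow_sub h2r, Real.rpow_one]
  have hcore : 0 ≤ u ^ p * (u - r) + (4*r^2) ^ (b-1) * (4*r^2 - r*u) := by
    rw [hB]
    have e1 : (2*r) ^ p / (2*r) * (4*r^2 - r*u) = (2*r) ^ p * ((4*r^2 - r*u)/(2*r)) := by
      ring
    have e2 : (4*r^2 - r*u)/(2*r) = 2*r - u/2 := by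
      field_simp; ring
    rw [e1, e2]
    nlinarith [mul_le_mul_of_nonneg_right hA (le_of_lt hr),
      mul_nonneg hN hu.le, mul_le_mul_of_nonneg_right hA (le_of_lt hu)]
  have hX : (0:ℝ) < u ^ (b-2) := Real.rpow_pos_of_pos hu _
  have hWX : (4*r^2/u) ^ (b-2) * u ^ (b-2) = (4*r^2) ^ (b-2) := by
    rw [← Real.mul_rpow (by positivity) hu.le, div_mul_cancel₀]
    exact hu.ne'
  have hXX : u ^ (b-2) * u ^ (b-2) * u^3 = u ^ p := by
    rw [← Real.rpow_add hu, ← Real.rpow_natCast u 3, ← Real.rpow_add hu,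
      show (b-2) + (b-2) + ((3:ℕ):ℝ) = p by push_cast [hp]; ring]
  have hYY : (4*r^2) ^ (b-2) * (4*r^2) = (4*r^2) ^ (b-1) := by
    rw [← Real.rpow_add_one (by positivity : (4*r^2:ℝ) ≠ 0)]
    ring_nf
  have hmul : (u ^ (b-2) * (u - r) + 4*r^2/u^2 * ((4*r^2/u) ^ (b-2) * (4*r^2/u - r)))
      * (u ^ (b-2) * u^3)
      = u ^ p * (u - r) + (4*r^2) ^ (b-1) * (4*r^2 - r*u) := by
    rw [← hYY, ← hXX, ← hWX]
    field_simp
  nlinarith [hmul, hcore, mul_pos hX (pow_pos hu 3)]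

section key
variable {b r : ℝ}

/-- The integrand of the derivative-sign integral. -/
noncomputable def Fk (b r s : ℝ) : ℝ := s ^ (b-2) * (s - r) * Real.exp (-(s/4) - r^2/s)

lemma Fk_integrableOn (hb : 1/2 < b) (hr : 0 < r) (E : Set ℝ) (hE : E ⊆ Set.Ioi 0)
    (hEm : MeasurableSet E) : IntegrableOn (Fk b r) E := by
  have h1 : IntegrableOn (fun s : ℝ => s ^ (b-1) * Real.exp (-(s/4) - r^2/s)
      - r * (s ^ (b-2) * Real.exp (-(s/4) - r^2/s))) (Set.Ioi 0) :=
    (main_integrable (by linarith) r).sub ((aux_integrable (by linarith) hr).const_mul r)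
  have h2 : IntegrableOn (Fk b r) (Set.Ioi 0) := by
    refine h1.congr_fun (fun s hs => ?_) measurableSet_Ioi
    simp only [Set.mem_Ioi] at hs
    have : s ^ (b-1) = s ^ (b-2) * s := by
      rw [← Real.rpow_add_one hs.ne']; ring_nf
    simp only [Fk, this]; ring
  exact h2.mono_set hE
end key

lemma inv_image (r : ℝ) (hr : 0 < r) :
    (fun u : ℝ => 4*r^2/u) '' Set.Ioo 0 (2*r) = Set.Ioi (2*r) := by
  ext y
  simp only [Set.mem_image, Set.mem_Ioo, Set.mem_Ioi]
  constructor
  · rintro ⟨u, ⟨hu0, hu2⟩, rfl⟩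
    calc 2*r = 4*r^2/(2*r) := by field_simp; ring
      _ < 4*r^2/u := by
          apply div_lt_div_of_pos_left (by positivity) hu0 hu2
  · intro hy
    have hy0 : 0 < y := lt_trans (by positivity) hy
    refine ⟨4*r^2/y, ⟨by positivity, ?_⟩, ?_⟩
    · rw [div_lt_iff₀ hy0]
      nlinarith
    · field_simp

lemma key_nonneg {b : ℝ} (hb : 1/2 < b) {r : ℝ} (hr : 0 < r) :
    0 ≤ ∫ s in Set.Ioi (0:ℝ), Fk b r s := by
  have h2r : (0:ℝ) < 2*r := by linarith
  -- split the integral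
  have hsplit : ∫ s in Set.Ioi (0:ℝ), Fk b r s
      = (∫ s in Set.Ioo (0:ℝ) (2*r), Fk b r s) + ∫ s in Set.Ioi (2*r), Fk b r s := by
    rw [← MeasureTheory.integral_Ioc_eq_integral_Ioo,
      ← setIntegral_union (Set.Ioc_disjoint_Ioi le_rfl) measurableSet_Ioi
      (Fk_integrableOn hb hr _ (fun x hx => hx.1) measurableSet_Ioc)
      (Fk_integrableOn hb hr _ (fun x hx => lt_trans h2r hx) measurableSet_Ioi),
      Set.Ioc_union_Ioi_eq_Ioi h2r.le]
  -- change of variables on the outer piece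
  have hder : ∀ u ∈ Set.Ioo (0:ℝ) (2*r), HasDerivWithinAt (fun u : ℝ => 4*r^2/u)
      (-(4*r^2)/u^2) (Set.Ioo 0 (2*r)) u := by
    intro u hu
    have : HasDerivAt (fun u : ℝ => 4*r^2/u) (-(4*r^2)/u^2) u := by
      simpa [div_eq_mul_inv, neg_div] using (hasDerivAt_inv hu.1.ne').const_mul (4*r^2)
    exact this.hasDerivWithinAt
  have hinj : Set.InjOn (fun u : ℝ => 4*r^2/u) (Set.Ioo 0 (2*r)) := by
    intro u hu v hv h
    have hu0 := hu.1.ne'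
    have hv0 := hv.1.ne'
    field_simp at h
    exact h.symm
  have hcov : ∫ s in Set.Ioi (2*r), Fk b r s
      = ∫ u in Set.Ioo (0:ℝ) (2*r), |(-(4*r^2)/u^2)| • Fk b r (4*r^2/u) := by
    rw [← inv_image r hr]
    exact integral_image_eq_integral_abs_deriv_smul measurableSet_Ioo hder hinj _
  have hcovInt : IntegrableOn (fun u : ℝ => |(-(4*r^2)/u^2)| • Fk b r (4*r^2/u))
      (Set.Ioo 0 (2*r)) := by
    rw [← integrableOn_image_iff_integrableOn_abs_deriv_smul measurableSet_Ioo hder hinj]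
    rw [inv_image r hr]
    exact Fk_integrableOn hb hr _ (fun x hx => lt_trans h2r hx) measurableSet_Ioi
  rw [hsplit, hcov, ← MeasureTheory.integral_add
    (Fk_integrableOn hb hr _ Set.Ioo_subset_Ioi_self measurableSet_Ioo) hcovInt]
  apply setIntegral_nonneg measurableSet_Ioo
  intro u hu
  obtain ⟨hu0, hu2⟩ := hu
  have hphi : -(4*r^2/u/4) - r^2/(4*r^2/u) = -(u/4) - r^2/u := by
    field_simp
    ring
  have habs : |(-(4*r^2)/u^2)| = 4*r^2/u^2 := by
    rw [abs_div, abs_neg, abs_of_nonneg (by positivity : (0:ℝ) ≤ 4*r^2),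
      abs_of_nonneg (by positivity : (0:ℝ) ≤ u^2)]
  simp only [Fk, smul_eq_mul, habs, hphi]
  have hbr := bracket_nonneg hb hr hu0 hu2
  have hexp : 0 < Real.exp (-(u/4) - r^2/u) := Real.exp_pos _
  nlinarith [hbr, hexp]

/-- Derivative of `I` at `r > 0`. -/
lemma I_hasDeriv {b : ℝ} (hb : 1/2 < b) {r : ℝ} (hr : 0 < r) :
    HasDerivAt (fun r : ℝ => ∫ s in Set.Ioi (0:ℝ), s ^ (b-1) * Real.exp (-(s/4) - r^2/s))
      (∫ s in Set.Ioi (0:ℝ), s ^ (b-1) * (Real.exp (-(s/4) - r^2/s) * (-(2*r)/s))) r := by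
  have hb0 : (0:ℝ) < b := by linarith
  have hmain := hasDerivAt_integral_of_dominated_loc_of_deriv_le (s := Metric.ball r (r/2))
    (μ := volume.restrict (Set.Ioi (0:ℝ)))
    (F := fun x s => s ^ (b-1) * Real.exp (-(s/4) - x^2/s))
    (F' := fun x s => s ^ (b-1) * (Real.exp (-(s/4) - x^2/s) * (-(2*x)/s)))
    (bound := fun s => 3*r * (s ^ (b-2) * Real.exp (-(s/4) - (r/2)^2/s)))
    (Metric.ball_mem_nhds r (by positivity)) ?_ (main_integrable hb0 r) ?_ ?_ ?_ ?_
  · exact hmain.2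
  · filter_upwards with x
    apply Measurable.aestronglyMeasurable; fun_prop
  · apply Measurable.aestronglyMeasurable; fun_prop
  · filter_upwards [ae_restrict_mem measurableSet_Ioi] with s hs
    simp only [Set.mem_Ioi] at hs
    intro x hx
    rw [Metric.mem_ball, Real.dist_eq, abs_lt] at hx
    have hx1 : r/2 < x := by linarith
    have hx2 : x < 3*r/2 := by linarith
    have hxpos : 0 < x := lt_trans (by positivity) hx1
    set E := Real.exp (-(s/4) - x^2/s) with hE
    have heq : s ^ (b-1) * (E * (-(2*x)/s))
        = -(2*x) * (s ^ (b-2) * E) := by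
      have hs' : s ^ (b-2) = s ^ (b-1) / s := by
        rw [← Real.rpow_sub_one hs.ne']; ring_nf
      rw [hs']; ring
    rw [heq, Real.norm_eq_abs, abs_mul, abs_neg, abs_of_nonneg (by positivity : (0:ℝ) ≤ 2*x),
      abs_of_nonneg (by positivity : (0:ℝ) ≤ s ^ (b-2) * E)]
    have h1 : (2:ℝ)*x ≤ 3*r := by linarith
    have h2 : E ≤ Real.exp (-(s/4) - (r/2)^2/s) := by
      rw [hE]
      apply Real.exp_le_exp.mpr
      have h3 : (r/2)^2 ≤ x^2 := by nlinarith
      have h4 : (r/2)^2/s ≤ x^2/s := by gcongr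
      linarith
    have h5 : s ^ (b-2) * E ≤ s ^ (b-2) * Real.exp (-(s/4) - (r/2)^2/s) :=
      mul_le_mul_of_nonneg_left h2 (Real.rpow_nonneg hs.le _)
    exact mul_le_mul h1 h5 (by positivity) (by positivity)
  · exact (aux_integrable hb0 (by positivity : (0:ℝ) < r/2)).const_mul (3*r)
  · filter_upwards [ae_restrict_mem measurableSet_Ioi] with s hs
    simp only [Set.mem_Ioi] at hs
    intro x hx
    have hd : HasDerivAt (fun x : ℝ => -(s/4) - x^2/s) (-(2*x)/s) x := by
      have h1 : HasDerivAt (fun x : ℝ => x^2) (2*x) x := by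
        simpa using hasDerivAt_pow 2 x
      have h2 := (h1.div_const s).const_sub (-(s/4))
      exact h2.congr_deriv (by ring)
    exact (hd.exp.const_mul (s ^ (b-1)))

lemma deriv_sum_nonneg {b : ℝ} (hb : 1/2 < b) {x : ℝ} (hx : 0 < x) :
    0 ≤ 2 * (∫ s in Set.Ioi (0:ℝ), s ^ (b-1) * Real.exp (-(s/4) - x^2/s))
      + ∫ s in Set.Ioi (0:ℝ), s ^ (b-1) * (Real.exp (-(s/4) - x^2/s) * (-(2*x)/s)) := by
  have hb0 : (0:ℝ) < b := by linarith
  have int1 : IntegrableOn (fun s : ℝ => 2 * (s ^ (b-1) * Real.exp (-(s/4) - x^2/s)))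
      (Set.Ioi 0) := (main_integrable hb0 x).const_mul 2
  have int2 : IntegrableOn (fun s : ℝ => s ^ (b-1) * (Real.exp (-(s/4) - x^2/s) * (-(2*x)/s)))
      (Set.Ioi 0) := by
    have haux : IntegrableOn (fun s : ℝ => -(2*x) * (s ^ (b-2) * Real.exp (-(s/4) - x^2/s)))
        (Set.Ioi 0) := (aux_integrable hb0 hx).const_mul (-(2*x))
    refine haux.congr_fun (fun s hs => ?_) measurableSet_Ioi
    simp only [Set.mem_Ioi] at hs
    have hs' : s ^ (b-2) = s ^ (b-1) / s := by
      rw [← Real.rpow_sub_one hs.ne']; ring_nf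
    simp only [hs']; ring
  have hcomb : 2 * (∫ s in Set.Ioi (0:ℝ), s ^ (b-1) * Real.exp (-(s/4) - x^2/s))
      + (∫ s in Set.Ioi (0:ℝ), s ^ (b-1) * (Real.exp (-(s/4) - x^2/s) * (-(2*x)/s)))
      = ∫ s in Set.Ioi (0:ℝ), (2 * (s ^ (b-1) * Real.exp (-(s/4) - x^2/s))
        + s ^ (b-1) * (Real.exp (-(s/4) - x^2/s) * (-(2*x)/s))) := by
    rw [MeasureTheory.integral_add int1 int2, MeasureTheory.integral_const_mul]
  rw [hcomb]
  have h2 : ∫ s in Set.Ioi (0:ℝ), (2 * (s ^ (b-1) * Real.exp (-(s/4) - x^2/s))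
        + s ^ (b-1) * (Real.exp (-(s/4) - x^2/s) * (-(2*x)/s)))
      = ∫ s in Set.Ioi (0:ℝ), 2 * Fk b x s := by
    apply setIntegral_congr_fun measurableSet_Ioi
    intro s hs
    simp only [Set.mem_Ioi] at hs
    have hs' : s ^ (b-1) = s ^ (b-2) * s := by
      rw [← Real.rpow_add_one hs.ne']; ring_nf
    simp only [Fk, hs']
    field_simp
    ring
  rw [h2, MeasureTheory.integral_const_mul]
  have := key_nonneg hb hx
  linarith

lemma harnack {b : ℝ} (hb : 1/2 < b) {u v : ℝ} (h0 : 0 ≤ u) (huv : u ≤ v) :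
    (∫ s in Set.Ioi (0:ℝ), s ^ (b-1) * Real.exp (-(s/4) - u^2/s))
      ≤ Real.exp (2*(v-u)) * ∫ s in Set.Ioi (0:ℝ), s ^ (b-1) * Real.exp (-(s/4) - v^2/s) := by
  have hb0 : (0:ℝ) < b := by linarith
  set J : ℝ → ℝ := fun r => ∫ s in Set.Ioi (0:ℝ), s ^ (b-1) * Real.exp (-(s/4) - r^2/s) with hJ
  have hmono : MonotoneOn (fun r => Real.exp (2*r) * J r) (Set.Ici 0) := by
    apply monotoneOn_of_deriv_nonneg (convex_Ici 0)
    · exact ((Real.continuous_exp.comp (continuous_const.mul continuous_id)).mul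
        (I_cont hb0)).continuousOn
    · rw [interior_Ici]
      intro x hx
      simp only [Set.mem_Ioi] at hx
      have hexp : HasDerivAt (fun r : ℝ => Real.exp (2*r)) (Real.exp (2*x) * 2) x :=
        ((hasDerivAt_id x).const_mul 2).exp.congr_deriv (by simp)
      exact ((hexp.mul (I_hasDeriv hb hx)).differentiableAt).differentiableWithinAt
    · rw [interior_Ici]
      intro x hx
      simp only [Set.mem_Ioi] at hx
      have hexp : HasDerivAt (fun r : ℝ => Real.exp (2*r)) (Real.exp (2*x) * 2) x :=
        ((hasDerivAt_id x).const_mul 2).exp.congr_deriv (by simp)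
      have hg := hexp.mul (I_hasDeriv hb hx)
      rw [show deriv (fun r => Real.exp (2*r) * J r) x = _ from hg.deriv]
      have hkey := deriv_sum_nonneg hb hx
      have hepos : 0 < Real.exp (2*x) := Real.exp_pos _
      have : Real.exp (2*x) * 2 * J x
          + Real.exp (2*x) * ∫ s in Set.Ioi (0:ℝ),
            s ^ (b-1) * (Real.exp (-(s/4) - x^2/s) * (-(2*x)/s))
          = Real.exp (2*x) * (2 * J x + ∫ s in Set.Ioi (0:ℝ),
            s ^ (b-1) * (Real.exp (-(s/4) - x^2/s) * (-(2*x)/s))) := by ring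
      rw [this]
      positivity
  have h1 := hmono (Set.mem_Ici.mpr h0) (Set.mem_Ici.mpr (le_trans h0 huv)) huv
  simp only at h1
  have he : Real.exp (2*(v-u)) = Real.exp (2*v) / Real.exp (2*u) := by
    rw [← Real.exp_sub]; ring_nf
  rw [he, div_mul_eq_mul_div, le_div_iff₀ (Real.exp_pos _)]
  simp only [hJ] at h1
  nlinarith [h1]

/-- Let `m ≥ 0` and let `U, V ⊆ ℝᵈ` satisfy `sup_{z∈U}‖z‖ < ∞` and
`inf{‖x−y‖ : x ∈ U, y ∈ ℝᵈ∖V} > 0`. Then there is `C₂ > 0` such that for every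
`x ∈ U` and `y ∈ ℝᵈ∖V`,
`Ψ(m^{1/α}‖x−y‖)·max(1, ‖y‖^{d+α}) ≤ C₂·Ψ(m^{1/α}‖y‖)·‖x−y‖^{d+α}`. -/
theorem stmt_13 (d : ℕ) (hd : 1 ≤ d) (α : ℝ) (hα : 0 < α) (hα2 : α < 2)
    (m : ℝ) (hm : 0 ≤ m) (U V : Set (EuclideanSpace ℝ (Fin d)))
    (hbdd : ∃ R : ℝ, ∀ z ∈ U, ‖z‖ ≤ R)
    (hsep : ∃ δ : ℝ, 0 < δ ∧ ∀ x ∈ U, ∀ y ∉ V, δ ≤ ‖x - y‖) :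
    ∃ C₂ : ℝ, 0 < C₂ ∧ ∀ x ∈ U, ∀ y ∉ V,
      Psi d α (m ^ (1 / α) * ‖x - y‖) * max 1 (‖y‖ ^ ((d : ℝ) + α)) ≤
        C₂ * Psi d α (m ^ (1 / α) * ‖y‖) * ‖x - y‖ ^ ((d : ℝ) + α) := by
  obtain ⟨R₀, hR₀⟩ := hbdd
  obtain ⟨δ, hδ, hsep⟩ := hsep
  set R : ℝ := max R₀ 0 with hR
  have hR0 : 0 ≤ R := le_max_right _ _
  set b : ℝ := ((d : ℝ) + α) / 2 with hbdef
  have hd1 : (1:ℝ) ≤ (d:ℝ) := by exact_mod_cast hd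
  have hb : 1/2 < b := by rw [hbdef]; linarith
  have hb0 : (0:ℝ) < b := by linarith
  set p : ℝ := (d : ℝ) + α with hpdef
  have hp : 0 < p := by rw [hpdef]; linarith
  set a : ℝ := m ^ (1/α) with ha
  have ha0 : 0 ≤ a := Real.rpow_nonneg hm _
  -- facts about Ifun / Psi
  have hIpos : ∀ r : ℝ, 0 < Ifun d α r := fun r => I_pos hb0 r
  have hPsipos : ∀ r : ℝ, 0 < Psi d α r := fun r => div_pos (hIpos r) (hIpos 0)
  have hIH : ∀ u v : ℝ, 0 ≤ u → u ≤ v →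
      Ifun d α u ≤ Real.exp (2*(v-u)) * Ifun d α v := fun u v h0 huv => harnack hb h0 huv
  have hIanti : ∀ u v : ℝ, 0 ≤ u → u ≤ v → Ifun d α v ≤ Ifun d α u :=
    fun u v h0 huv => I_anti hb0 h0 huv
  have hPsiH : ∀ u v : ℝ, 0 ≤ u → u ≤ v →
      Psi d α u ≤ Real.exp (2*(v-u)) * Psi d α v := by
    intro u v h0 huv
    have h := hIH u v h0 huv
    unfold Psi
    rw [← mul_div_assoc]
    exact (div_le_div_iff_of_pos_right (hIpos 0)).mpr h
  have hPsianti : ∀ u v : ℝ, 0 ≤ u → u ≤ v → Psi d α v ≤ Psi d α u := by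
    intro u v h0 huv
    unfold Psi
    exact (div_le_div_iff_of_pos_right (hIpos 0)).mpr (hIanti u v h0 huv)
  -- constant
  refine ⟨Real.exp (2*a*R) * max (δ ^ (-p)) ((1 + R/δ) ^ p), by positivity, ?_⟩
  intro x hx y hy
  set s : ℝ := ‖x - y‖ with hs
  set t : ℝ := ‖y‖ with ht
  have hsδ : δ ≤ s := hsep x hx y hy
  have hs0 : 0 < s := lt_of_lt_of_le hδ hsδ
  have ht0 : 0 ≤ t := norm_nonneg _
  have htsR : t ≤ s + R := by
    have h1 : ‖y‖ ≤ ‖x - y‖ + ‖x‖ := by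
      calc ‖y‖ = ‖x - (x - y)‖ := by rw [sub_sub_cancel]
        _ ≤ ‖x‖ + ‖x - y‖ := norm_sub_le _ _
        _ = ‖x - y‖ + ‖x‖ := by ring
    have h2 : ‖x‖ ≤ R := le_trans (hR₀ x hx) (le_max_left _ _)
    rw [ht, hs]; linarith
  -- Step 1 : max 1 (t^p) ≤ K₁ * s^p
  have hsp : (0:ℝ) < s ^ p := Real.rpow_pos_of_pos hs0 _
  have hstep1 : max 1 (t ^ p) ≤ max (δ ^ (-p)) ((1 + R/δ) ^ p) * s ^ p := by
    have h11 : (1:ℝ) ≤ δ ^ (-p) * s ^ p := by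
      rw [Real.rpow_neg hδ.le]
      have hd1' : δ ^ p ≤ s ^ p := Real.rpow_le_rpow hδ.le hsδ hp.le
      have hdp : (0:ℝ) < δ ^ p := Real.rpow_pos_of_pos hδ _
      calc (1:ℝ) = (δ^p)⁻¹ * δ^p := by field_simp
        _ ≤ (δ^p)⁻¹ * s^p := by gcongr
    have h12 : t ^ p ≤ (1 + R/δ) ^ p * s ^ p := by
      have hc : (0:ℝ) ≤ 1 + R/δ := by positivity
      have h13 : t ≤ (1 + R/δ) * s := by
        have hRs : R ≤ R/δ * s := by
          rw [div_mul_eq_mul_div, le_div_iff₀ hδ]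
          nlinarith
        nlinarith
      calc t ^ p ≤ ((1 + R/δ) * s) ^ p := Real.rpow_le_rpow ht0 h13 hp.le
        _ = (1 + R/δ) ^ p * s ^ p := Real.mul_rpow hc hs0.le
    calc max 1 (t^p) ≤ max (δ^(-p) * s^p) ((1 + R/δ)^p * s^p) := max_le_max h11 h12
      _ = max (δ^(-p)) ((1 + R/δ)^p) * s^p := (max_mul_of_nonneg _ _ hsp.le).symm
  have hstep2 : Psi d α (a*s) ≤ Real.exp (2*a*R) * Psi d α (a*t) := by
    have h1 : Psi d α (a*(s+R)) ≤ Psi d α (a*t) := by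
      apply hPsianti _ _ (mul_nonneg ha0 ht0)
      nlinarith
    have h2 : Psi d α (a*s) ≤ Real.exp (2*(a*(s+R) - a*s)) * Psi d α (a*(s+R)) := by
      apply hPsiH _ _ (mul_nonneg ha0 hs0.le)
      nlinarith
    have h3 : 2*(a*(s+R) - a*s) = 2*a*R := by ring
    rw [h3] at h2
    calc Psi d α (a*s) ≤ Real.exp (2*a*R) * Psi d α (a*(s+R)) := h2
      _ ≤ Real.exp (2*a*R) * Psi d α (a*t) :=
          mul_le_mul_of_nonneg_left h1 (Real.exp_nonneg _)
  have hmax0 : (0:ℝ) ≤ max 1 (t ^ p) := le_trans zero_le_one (le_max_left _ _)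
  calc Psi d α (a * s) * max 1 (t ^ p)
      ≤ (Real.exp (2*a*R) * Psi d α (a*t)) * (max (δ ^ (-p)) ((1 + R/δ) ^ p) * s ^ p) :=
        mul_le_mul hstep2 hstep1 hmax0
          (mul_nonneg (Real.exp_nonneg _) (hPsipos _).le)
    _ = Real.exp (2*a*R) * max (δ ^ (-p)) ((1 + R/δ) ^ p) * Psi d α (a*t) * s ^ p := by
        ring
end

section
/- Let m ≥ 0 and let U, V ⊆ ℝᵈ satisfy sup_{z∈U} ‖z‖ < ∞, inf{‖x − y‖ : x ∈ U, y ∈ ℝᵈ∖V} > 0, and inf{‖y‖ : y ∈ ℝᵈ∖V} > 0 (in particular 0 ∈ V). Then there exists C₁ > 0 such that for every x ∈ U and every y ∈ ℝᵈ∖V: C₁ · Ψ(m^{1/α}‖y‖) · ‖x − y‖^{d+α} ≤ Ψ(m^{1/α}‖x − y‖) · max(1, ‖y‖^{d+α}) (equivalently, Ψ(m^{1/α}‖x−y‖)/‖x−y‖^{d+α} ≥ C₁ Ψ(m^{1/α}‖y‖) min(1, ‖y‖^{−(d+α)})). -/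
set_option maxHeartbeats 1000000

open MeasureTheory Set Real

namespace Stmt14

/-- integrand of `I`. -/
noncomputable def jfun (p r s : ℝ) : ℝ := s ^ p * Real.exp (-(s / 4) - r ^ 2 / s)

/-- Gaussian-form integrand. -/
noncomputable def gfun (p r s : ℝ) : ℝ := s ^ p * Real.exp (-((s - 2 * r) ^ 2 / (4 * s)))

noncomputable def J (p r : ℝ) : ℝ := ∫ s in Set.Ioi (0 : ℝ), jfun p r s

noncomputable def F (p r : ℝ) : ℝ := ∫ s in Set.Ioi (0 : ℝ), gfun p r s

lemma exp_split {r s : ℝ} (hs : 0 < s) :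
    Real.exp (-(s / 4) - r ^ 2 / s) = Real.exp (-r) * Real.exp (-((s - 2 * r) ^ 2 / (4 * s))) := by
  rw [← Real.exp_add]
  congr 1
  field_simp
  ring

lemma meas_jfun (p r : ℝ) : Measurable (jfun p r) := by
  unfold jfun; fun_prop

lemma meas_gfun (p r : ℝ) : Measurable (gfun p r) := by
  unfold gfun; fun_prop

lemma integrable_base {p : ℝ} (hp : -1 < p) {b : ℝ} (hb : 0 < b) :
    IntegrableOn (fun s : ℝ => s ^ p * Real.exp (-(b * s))) (Set.Ioi 0) := by
  have h := integrableOn_rpow_mul_exp_neg_mul_rpow hp (one_pos : (0 : ℝ) < 1) hb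
  simpa [Real.rpow_one] using h

lemma integrable_jfun {p : ℝ} (hp : -1 < p) (r : ℝ) : IntegrableOn (jfun p r) (Set.Ioi 0) := by
  apply ((integrable_base hp (by norm_num : (0:ℝ) < 1/4)).mono'
    (meas_jfun p r).aestronglyMeasurable.restrict)
  filter_upwards [ae_restrict_mem measurableSet_Ioi] with s hs
  have hs0 : (0:ℝ) < s := hs
  have h1 : (0:ℝ) ≤ s ^ p := Real.rpow_nonneg hs0.le p
  have h2 : Real.exp (-(s / 4) - r ^ 2 / s) ≤ Real.exp (-(1/4 * s)) := by
    apply Real.exp_le_exp.2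
    have : 0 ≤ r ^ 2 / s := div_nonneg (sq_nonneg r) hs0.le
    nlinarith
  unfold jfun
  rw [Real.norm_eq_abs, abs_of_nonneg (by positivity)]
  exact mul_le_mul_of_nonneg_left h2 h1

lemma integrable_gfun {p : ℝ} (hp : -1 < p) (r : ℝ) : IntegrableOn (gfun p r) (Set.Ioi 0) := by
  have h : IntegrableOn (fun s => Real.exp r * jfun p r s) (Set.Ioi 0) :=
    (integrable_jfun hp r).const_mul _
  apply h.congr_fun _ measurableSet_Ioi
  intro s hs
  have hs0 : (0:ℝ) < s := hs
  unfold jfun gfun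
  show Real.exp r * (s ^ p * Real.exp (-(s / 4) - r ^ 2 / s)) = _
  rw [exp_split hs0, Real.exp_neg]
  field_simp

lemma J_eq (p r : ℝ) : J p r = Real.exp (-r) * F p r := by
  unfold J F
  rw [← integral_const_mul]
  apply setIntegral_congr_fun measurableSet_Ioi
  intro s hs
  unfold jfun gfun
  rw [exp_split (hs : (0:ℝ) < s)]
  ring

lemma integral_pos_aux {f : ℝ → ℝ} (hint : IntegrableOn f (Set.Ioi 0))
    (hpos : ∀ s ∈ Set.Ioi (0:ℝ), 0 < f s) : 0 < ∫ s in Set.Ioi (0:ℝ), f s := by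
  rw [setIntegral_pos_iff_support_of_nonneg_ae ?_ hint]
  · have hsub : Set.Ioi (0:ℝ) ⊆ Function.support f ∩ Set.Ioi 0 :=
      fun s hs => ⟨(hpos s hs).ne', hs⟩
    refine lt_of_lt_of_le ?_ (measure_mono hsub)
    simp [Real.volume_Ioi]
  · filter_upwards [ae_restrict_mem measurableSet_Ioi] with s hs using (hpos s hs).le

lemma J_pos {p : ℝ} (hp : -1 < p) (r : ℝ) : 0 < J p r :=
  integral_pos_aux (integrable_jfun hp r)
    (fun s hs => mul_pos (Real.rpow_pos_of_pos hs p) (Real.exp_pos _))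

lemma J_anti {p : ℝ} (hp : -1 < p) {r r' : ℝ} (h0 : 0 ≤ r) (h : r ≤ r') : J p r' ≤ J p r := by
  apply setIntegral_mono_on (integrable_jfun hp r') (integrable_jfun hp r) measurableSet_Ioi
  intro s hs
  have hs0 : (0:ℝ) < s := hs
  unfold jfun
  apply mul_le_mul_of_nonneg_left _ (Real.rpow_nonneg hs0.le p)
  apply Real.exp_le_exp.2
  have hr2 : r ^ 2 ≤ r' ^ 2 := by nlinarith
  have : r ^ 2 / s ≤ r' ^ 2 / s := by gcongr
  linarith

lemma sqrt_exp_le (r : ℝ) (hr : 0 ≤ r) : Real.sqrt r * Real.exp (-(r / 4)) ≤ 4 := by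
  have hs : Real.sqrt r ^ 2 = r := Real.sq_sqrt hr
  have hsn : 0 ≤ Real.sqrt r := Real.sqrt_nonneg r
  rcases le_total r 4 with h | h
  · have h2 : Real.sqrt r ≤ 2 := by
      nlinarith
    have h3 : Real.exp (-(r / 4)) ≤ 1 := by
      calc Real.exp (-(r / 4)) ≤ Real.exp 0 := Real.exp_le_exp.2 (by linarith)
        _ = 1 := Real.exp_zero
    nlinarith [Real.exp_pos (-(r/4))]
  · have hE : Real.exp (-(r / 4)) * Real.exp (r / 4) = 1 := by
      rw [← Real.exp_add]; simp
    have h4 : r / 4 ≤ Real.exp (r / 4) := by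
      have := Real.add_one_le_exp (r / 4); linarith
    have hEpos := Real.exp_pos (-(r/4))
    have h5 : Real.exp (-(r / 4)) ≤ 4 / r := by
      rw [le_div_iff₀ (by linarith : (0:ℝ) < r)]
      nlinarith [Real.exp_pos (r/4)]
    have h6 : 2 ≤ Real.sqrt r := by nlinarith
    have h7 : Real.sqrt r * (4 / r) ≤ 4 := by
      rw [mul_div_assoc' , div_le_iff₀ (by linarith)]
      nlinarith
    nlinarith

lemma F_upper {p : ℝ} (hp : (-1:ℝ)/2 < p) :
    ∃ C : ℝ, 0 < C ∧ ∀ r : ℝ, 0 ≤ r → F p r ≤ C * (1 + r) ^ (p + 1/2) := by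
  have hp1 : (-1:ℝ) < p := by linarith
  have hq : (0:ℝ) < p + 1/2 := by linarith
  have hp1' : (0:ℝ) < p + 1 := by linarith
  set q := p + 1/2 with hqdef
  set CA := ∫ s in Set.Ioi (0:ℝ), s ^ p * Real.exp (-(16⁻¹ * s)) with hCAdef
  have hCAint : IntegrableOn (fun s : ℝ => s ^ p * Real.exp (-(16⁻¹ * s))) (Set.Ioi 0) :=
    integrable_base hp1 (by norm_num)
  have hCApos : 0 < CA := integral_pos_aux hCAint (fun s hs => by
    have : (0:ℝ) < s := hs
    positivity)
  have hsqp : (0:ℝ) < Real.sqrt π := Real.sqrt_pos.2 Real.pi_pos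
  have h4p : (0:ℝ) < (4:ℝ) ^ p + 1 := by positivity
  refine ⟨CA + 4/(p+1) + ((4:ℝ) ^ p + 1) * (4 * Real.sqrt π), by positivity, ?_⟩
  intro r hr
  have hone : (1:ℝ) ≤ (1+r) ^ q := Real.one_le_rpow (by linarith) hq.le
  have hCA1 : CA ≤ CA * (1+r) ^ q := le_mul_of_one_le_right hCApos.le hone
  have hrq_exp : ∀ r' : ℝ, 0 < r' → r' ^ (q : ℝ) = r' ^ p * Real.sqrt r' := by
    intro r' hr'
    rw [Real.sqrt_eq_rpow, ← Real.rpow_add hr']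
  rcases eq_or_lt_of_le hr with heq | hr0
  · -- r = 0
    subst heq
    have hF0 : F p 0 ≤ CA := by
      unfold F
      apply setIntegral_mono_on (integrable_gfun hp1 0) hCAint measurableSet_Ioi
      intro s hs
      have hs0 : (0:ℝ) < s := hs
      unfold gfun
      apply mul_le_mul_of_nonneg_left _ (Real.rpow_nonneg hs0.le p)
      apply Real.exp_le_exp.2
      have hval : (s - 2*0)^2/(4*s) = s/4 := by field_simp; ring
      rw [hval]
      linarith
    have hX : (0:ℝ) ≤ 4/(p+1) + ((4:ℝ)^p+1)*(4*Real.sqrt π) := by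
      have := div_pos (show (0:ℝ) < 4 by norm_num) hp1'
      nlinarith
    calc F p 0 ≤ CA := hF0
      _ ≤ CA * (1+0:ℝ)^q := hCA1
      _ ≤ (CA + (4/(p+1) + ((4:ℝ)^p+1)*(4*Real.sqrt π))) * (1+0:ℝ)^q := by
          apply mul_le_mul_of_nonneg_right (by linarith) (by positivity)
      _ = (CA + 4/(p+1) + ((4:ℝ)^p+1)*(4*Real.sqrt π)) * (1+0:ℝ)^q := by ring
  · -- r > 0
    have igr := integrable_gfun hp1 r
    have hsub1 : Set.Ioc (0:ℝ) r ⊆ Set.Ioi 0 := Set.Ioc_subset_Ioi_self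
    have hsub2 : Set.Ioc r (4*r) ⊆ Set.Ioi (0:ℝ) := fun s hs => lt_trans hr0 hs.1
    have hsub3 : Set.Ioi (4*r) ⊆ Set.Ioi (0:ℝ) := Set.Ioi_subset_Ioi (by linarith)
    have hsubr : Set.Ioi r ⊆ Set.Ioi (0:ℝ) := Set.Ioi_subset_Ioi hr
    have ig1 := igr.mono_set hsub1
    have ig2 := igr.mono_set hsub2
    have ig3 := igr.mono_set hsub3
    have igr' := igr.mono_set hsubr
    have e1 : (∫ s in Set.Ioi r, gfun p r s) =
        (∫ s in Set.Ioc r (4*r), gfun p r s) + ∫ s in Set.Ioi (4*r), gfun p r s := by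
      rw [← setIntegral_union (Set.Ioc_disjoint_Ioi le_rfl) measurableSet_Ioi ig2 ig3,
        Set.Ioc_union_Ioi_eq_Ioi (by linarith : r ≤ 4*r)]
    have e0 : F p r = (∫ s in Set.Ioc 0 r, gfun p r s) + ∫ s in Set.Ioi r, gfun p r s := by
      unfold F
      rw [← setIntegral_union (Set.Ioc_disjoint_Ioi le_rfl) measurableSet_Ioi ig1 igr',
        Set.Ioc_union_Ioi_eq_Ioi hr]
    -- piece 3
    have hA3 : (∫ s in Set.Ioi (4*r), gfun p r s) ≤ CA := by
      have step : (∫ s in Set.Ioi (4*r), gfun p r s) ≤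
          ∫ s in Set.Ioi (4*r), s ^ p * Real.exp (-(16⁻¹ * s)) := by
        apply setIntegral_mono_on ig3 (hCAint.mono_set hsub3) measurableSet_Ioi
        intro s hs
        have hs4 : 4*r < s := hs
        have hs0 : (0:ℝ) < s := by linarith
        unfold gfun
        apply mul_le_mul_of_nonneg_left _ (Real.rpow_nonneg hs0.le p)
        apply Real.exp_le_exp.2
        have h2 : s^2/4 ≤ (s - 2*r)^2 := by nlinarith
        have h3 : 16⁻¹*s ≤ (s-2*r)^2/(4*s) := by
          rw [le_div_iff₀ (by linarith : (0:ℝ) < 4*s)]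
          nlinarith
        linarith
      refine step.trans ?_
      apply setIntegral_mono_set hCAint ?_ hsub3.eventuallyLE
      filter_upwards [ae_restrict_mem measurableSet_Ioi] with s hs
      have hs0 : (0:ℝ) < s := hs
      positivity
    -- piece 1
    have hIoc : (∫ s in Set.Ioc (0:ℝ) r, s ^ p) = r ^ (p+1) / (p+1) := by
      rw [← intervalIntegral.integral_of_le hr, integral_rpow (Or.inl hp1),
        Real.zero_rpow (by linarith : p + 1 ≠ 0)]
      ring
    have hA1 : (∫ s in Set.Ioc (0:ℝ) r, gfun p r s) ≤ (4/(p+1)) * (1+r)^q := by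
      have ib : IntegrableOn (fun s : ℝ => s ^ p * Real.exp (-(r/4))) (Set.Ioc 0 r) :=
        ((intervalIntegral.intervalIntegrable_rpow' (a := 0) (b := r) hp1).1).mul_const _
      have step : (∫ s in Set.Ioc (0:ℝ) r, gfun p r s) ≤
          ∫ s in Set.Ioc (0:ℝ) r, s ^ p * Real.exp (-(r/4)) := by
        apply setIntegral_mono_on ig1 ib measurableSet_Ioc
        intro s hs
        have hs0 : (0:ℝ) < s := hs.1
        have hsr : s ≤ r := hs.2
        unfold gfun
        apply mul_le_mul_of_nonneg_left _ (Real.rpow_nonneg hs0.le p)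
        apply Real.exp_le_exp.2
        have h1 : r^2 ≤ (s - 2*r)^2 := by nlinarith
        have h3 : r/4 ≤ (s-2*r)^2/(4*s) := by
          rw [le_div_iff₀ (by linarith : (0:ℝ) < 4*s)]
          nlinarith
        linarith
      refine step.trans ?_
      rw [integral_mul_const, hIoc]
      have hkey : r ^ (p+1) * Real.exp (-(r/4)) ≤ 4 * r ^ q := by
        have hsplit : r ^ (p+1) = r ^ q * Real.sqrt r := by
          rw [Real.sqrt_eq_rpow, ← Real.rpow_add hr0]
          congr 1
          rw [hqdef]; ring
        rw [hsplit, mul_assoc]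
        have h4 := sqrt_exp_le r hr
        nlinarith [Real.rpow_nonneg hr q, Real.sqrt_nonneg r, Real.exp_pos (-(r/4))]
      have hrq : r ^ q ≤ (1+r) ^ q := Real.rpow_le_rpow hr (by linarith) hq.le
      have h40 : (0:ℝ) ≤ 4/(p+1) := div_nonneg (by norm_num) hp1'.le
      calc r^(p+1)/(p+1) * Real.exp (-(r/4)) = (r^(p+1) * Real.exp (-(r/4)))/(p+1) := by ring
        _ ≤ (4 * r^q)/(p+1) := by apply div_le_div_of_nonneg_right hkey hp1'.le
        _ = 4/(p+1) * r^q := by ring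
        _ ≤ 4/(p+1) * (1+r)^q := mul_le_mul_of_nonneg_left hrq h40
    -- piece 2
    have hb : (0:ℝ) < (16*r)⁻¹ := by positivity
    have hgauss_int : Integrable (fun s : ℝ => Real.exp (-((16*r)⁻¹ * (s - 2*r)^2))) := by
      have h := (integrable_exp_neg_mul_sq hb).comp_sub_right (2*r)
      simpa using h
    have hA2 : (∫ s in Set.Ioc r (4*r), gfun p r s) ≤
        ((4:ℝ)^p + 1) * (4*Real.sqrt π) * (1+r)^q := by
      have hrp : (0:ℝ) < r ^ p := Real.rpow_pos_of_pos hr0 p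
      have hsp_bound : ∀ s ∈ Set.Ioc r (4*r), s ^ p ≤ ((4:ℝ)^p + 1) * r ^ p := by
        intro s hs
        rcases le_or_gt 0 p with hp0 | hp0
        · have h1 : s ^ p ≤ (4*r) ^ p :=
            Real.rpow_le_rpow (le_of_lt (lt_trans hr0 hs.1)) hs.2 hp0
          rw [Real.mul_rpow (by norm_num) hr0.le] at h1
          nlinarith
        · have h1 : s ^ p ≤ r ^ p := Real.rpow_le_rpow_of_nonpos hr0 hs.1.le hp0.le
          nlinarith [Real.rpow_pos_of_pos (show (0:ℝ) < 4 by norm_num) p]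
      have step1 : (∫ s in Set.Ioc r (4*r), gfun p r s) ≤
          ∫ s in Set.Ioc r (4*r), ((4:ℝ)^p+1) * r^p * Real.exp (-((16*r)⁻¹ * (s - 2*r)^2)) := by
        apply setIntegral_mono_on ig2 ((hgauss_int.const_mul _).integrableOn) measurableSet_Ioc
        intro s hs
        unfold gfun
        have hs0 : (0:ℝ) < s := lt_trans hr0 hs.1
        have hs2 : s ≤ 4*r := hs.2
        have hexp : Real.exp (-((s - 2*r)^2/(4*s))) ≤ Real.exp (-((16*r)⁻¹ * (s-2*r)^2)) := by
          apply Real.exp_le_exp.2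
          have hle : (16*r)⁻¹ * (s-2*r)^2 ≤ (s-2*r)^2/(4*s) := by
            rw [← div_eq_inv_mul]
            exact div_le_div_of_nonneg_left (sq_nonneg _) (by linarith) (by linarith)
          linarith
        calc s ^ p * Real.exp (-((s - 2*r)^2/(4*s)))
            ≤ ((4:ℝ)^p+1)*r^p * Real.exp (-((s-2*r)^2/(4*s))) :=
              mul_le_mul_of_nonneg_right (hsp_bound s hs) (Real.exp_pos _).le
          _ ≤ ((4:ℝ)^p+1)*r^p * Real.exp (-((16*r)⁻¹ * (s-2*r)^2)) :=
              mul_le_mul_of_nonneg_left hexp (by positivity)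
      have step2 : (∫ s in Set.Ioc r (4*r), ((4:ℝ)^p+1) * r^p * Real.exp (-((16*r)⁻¹ * (s - 2*r)^2)))
          = ((4:ℝ)^p+1) * r^p * ∫ s in Set.Ioc r (4*r), Real.exp (-((16*r)⁻¹ * (s - 2*r)^2)) := by
        rw [integral_const_mul]
      have step3 : (∫ s in Set.Ioc r (4*r), Real.exp (-((16*r)⁻¹ * (s - 2*r)^2)))
          ≤ 4 * Real.sqrt π * Real.sqrt r := by
        have hle := setIntegral_le_integral (s := Set.Ioc r (4*r)) hgauss_int
          (Filter.Eventually.of_forall (fun s => (Real.exp_pos _).le))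
        refine hle.trans ?_
        have heq2 : (∫ s : ℝ, Real.exp (-((16*r)⁻¹ * (s - 2*r)^2)))
            = ∫ s : ℝ, Real.exp (-((16*r)⁻¹ * s^2)) :=
          integral_sub_right_eq_self (fun s => Real.exp (-((16*r)⁻¹ * s^2))) (2*r)
        rw [heq2]
        simp only [← neg_mul]
        rw [integral_gaussian]
        have hval : π / (16*r)⁻¹ = π * (16*r) := by
          field_simp
        rw [hval, Real.sqrt_mul Real.pi_pos.le, Real.sqrt_mul (by norm_num : (0:ℝ) ≤ 16) r,
          show Real.sqrt 16 = 4 by rw [show (16:ℝ) = 4^2 by norm_num, Real.sqrt_sq (by norm_num : (0:ℝ) ≤ 4)]]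
        ring_nf
        exact le_refl _
      have hrqeq : r ^ p * Real.sqrt r = r ^ q := (hrq_exp r hr0).symm
      have hrq : r ^ q ≤ (1+r) ^ q := Real.rpow_le_rpow hr (by linarith) hq.le
      calc (∫ s in Set.Ioc r (4*r), gfun p r s)
          ≤ ((4:ℝ)^p+1) * r^p * ∫ s in Set.Ioc r (4*r), Real.exp (-((16*r)⁻¹ * (s - 2*r)^2)) := by
            rw [← step2]; exact step1
        _ ≤ ((4:ℝ)^p+1) * r^p * (4 * Real.sqrt π * Real.sqrt r) :=
            mul_le_mul_of_nonneg_left step3 (by positivity)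
        _ = ((4:ℝ)^p+1) * (4 * Real.sqrt π) * (r ^ p * Real.sqrt r) := by ring
        _ = ((4:ℝ)^p+1) * (4 * Real.sqrt π) * r ^ q := by rw [hrqeq]
        _ ≤ ((4:ℝ)^p+1) * (4 * Real.sqrt π) * (1+r)^q := by
            apply mul_le_mul_of_nonneg_left hrq (by positivity)
    have expand : (CA + 4/(p+1) + ((4:ℝ)^p+1)*(4*Real.sqrt π)) * (1+r)^q
        = CA*(1+r)^q + (4/(p+1))*(1+r)^q + (((4:ℝ)^p+1)*(4*Real.sqrt π))*(1+r)^q := by ring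
    rw [e0, e1, expand]
    linarith

lemma gfun_nonneg_ae (p r : ℝ) : 0 ≤ᵐ[volume.restrict (Set.Ioi (0:ℝ))] gfun p r := by
  filter_upwards [ae_restrict_mem measurableSet_Ioi] with s hs
  have hs0 : (0:ℝ) < s := hs
  unfold gfun
  positivity

lemma F_lower {p : ℝ} (hp : (-1:ℝ)/2 < p) :
    ∃ c : ℝ, 0 < c ∧ ∀ r : ℝ, 0 ≤ r → c * (1 + r) ^ (p + 1/2) ≤ F p r := by
  have hp1 : (-1:ℝ) < p := by linarith
  have hq : (0:ℝ) < p + 1/2 := by linarith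
  set q := p + 1/2 with hqdef
  have h2q : (0:ℝ) < (2:ℝ) ^ q := Real.rpow_pos_of_pos two_pos q
  have h2p : (0:ℝ) < (2:ℝ) ^ p := Real.rpow_pos_of_pos two_pos p
  have h3p : (0:ℝ) < (3:ℝ) ^ p := Real.rpow_pos_of_pos (by norm_num) p
  set c₀ := min 1 ((2:ℝ)^p) * Real.exp (-1) with hc0def
  have hc0pos : 0 < c₀ := mul_pos (lt_min one_pos h2p) (Real.exp_pos _)
  set κ := min ((2:ℝ)^p) ((3:ℝ)^p) with hκdef
  have hκpos : 0 < κ := lt_min h2p h3p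
  refine ⟨min (c₀ / 2^q) (κ * Real.exp (-1) / 2^q),
    lt_min (div_pos hc0pos h2q) (div_pos (mul_pos hκpos (Real.exp_pos _)) h2q), ?_⟩
  intro r hr
  rcases le_or_gt r 1 with hsml | hbig
  · -- small r
    have hsubset : Set.Ioc (1:ℝ) 2 ⊆ Set.Ioi 0 := fun s hs => lt_trans one_pos hs.1
    have hlow : ∀ s ∈ Set.Ioc (1:ℝ) 2, c₀ ≤ gfun p r s := by
      intro s hs
      have hs1 : (1:ℝ) < s := hs.1
      have hs2 : s ≤ 2 := hs.2
      have hmin : min 1 ((2:ℝ)^p) ≤ s ^ p := by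
        rcases le_or_gt 0 p with hp0 | hp0
        · exact le_trans (min_le_left _ _) (Real.one_le_rpow hs1.le hp0)
        · exact le_trans (min_le_right _ _)
            (Real.rpow_le_rpow_of_nonpos (by linarith) hs2 hp0.le)
      have hexp : Real.exp (-1) ≤ Real.exp (-((s - 2*r)^2/(4*s))) := by
        apply Real.exp_le_exp.2
        have h1 : (s - 2*r)^2/(4*s) ≤ 1 := by
          rw [div_le_one (by linarith : (0:ℝ) < 4*s)]
          nlinarith
        linarith
      unfold gfun
      calc c₀ = min 1 ((2:ℝ)^p) * Real.exp (-1) := hc0def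
        _ ≤ s ^ p * Real.exp (-((s - 2*r)^2/(4*s))) :=
          mul_le_mul hmin hexp (Real.exp_pos _).le (Real.rpow_nonneg (by linarith) p)
    have hμ : (volume (Set.Ioc (1:ℝ) 2)).toReal = 1 := by
      rw [Real.volume_Ioc]
      norm_num
    have hstep := setIntegral_ge_of_const_le measurableSet_Ioc measure_Ioc_lt_top.ne hlow
      ((integrable_gfun hp1 r).mono_set hsubset)
    rw [measureReal_def, hμ, one_smul] at hstep
    have hFge : (∫ s in Set.Ioc (1:ℝ) 2, gfun p r s) ≤ F p r :=
      setIntegral_mono_set (integrable_gfun hp1 r) (gfun_nonneg_ae p r) hsubset.eventuallyLE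
    have h1r : (1+r) ^ q ≤ 2 ^ q := Real.rpow_le_rpow (by linarith) (by linarith) hq.le
    calc min (c₀ / 2^q) (κ * Real.exp (-1) / 2^q) * (1+r)^q
        ≤ (c₀ / 2^q) * 2^q := by
          apply mul_le_mul (min_le_left _ _) h1r
            (Real.rpow_nonneg (by linarith) q) (div_pos hc0pos h2q).le
      _ = c₀ := div_mul_cancel₀ _ h2q.ne'
      _ ≤ F p r := le_trans hstep hFge
  · -- r > 1
    have hr0 : (0:ℝ) < r := by linarith
    have hsq : Real.sqrt r ^ 2 = r := Real.sq_sqrt hr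
    have hsqpos : 0 < Real.sqrt r := Real.sqrt_pos.2 hr0
    have hsr : Real.sqrt r ≤ r := by nlinarith [sq_nonneg (Real.sqrt r - 1)]
    have hsubS : Set.Ioc (2*r) (2*r + Real.sqrt r) ⊆ Set.Ioi (0:ℝ) :=
      fun s hs => lt_trans (by linarith) hs.1
    have hlow : ∀ s ∈ Set.Ioc (2*r) (2*r + Real.sqrt r), κ * Real.exp (-1) * r^p ≤ gfun p r s := by
      intro s hs
      have hs1 : 2*r < s := hs.1
      have hs2 : s ≤ 2*r + Real.sqrt r := hs.2
      have hs3 : s ≤ 3*r := by linarith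
      have hs0 : (0:ℝ) < s := by linarith
      have hrp : (0:ℝ) < r ^ p := Real.rpow_pos_of_pos hr0 p
      have hmin : κ * r ^ p ≤ s ^ p := by
        rcases le_or_gt 0 p with hp0 | hp0
        · have h1 : (2*r) ^ p ≤ s ^ p := Real.rpow_le_rpow (by linarith) hs1.le hp0
          rw [Real.mul_rpow (by norm_num) hr0.le] at h1
          have := min_le_left ((2:ℝ)^p) ((3:ℝ)^p)
          nlinarith
        · have h1 : (3*r) ^ p ≤ s ^ p := Real.rpow_le_rpow_of_nonpos hs0 hs3 hp0.le
          rw [Real.mul_rpow (by norm_num) hr0.le] at h1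
          have := min_le_right ((2:ℝ)^p) ((3:ℝ)^p)
          nlinarith
      have hexp : Real.exp (-1) ≤ Real.exp (-((s - 2*r)^2/(4*s))) := by
        apply Real.exp_le_exp.2
        have h1 : (s - 2*r)^2/(4*s) ≤ 1 := by
          rw [div_le_one (by linarith : (0:ℝ) < 4*s)]
          nlinarith
        linarith
      unfold gfun
      calc κ * Real.exp (-1) * r^p = (κ * r^p) * Real.exp (-1) := by ring
        _ ≤ s ^ p * Real.exp (-((s - 2*r)^2/(4*s))) :=
          mul_le_mul hmin hexp (Real.exp_pos _).le (Real.rpow_nonneg hs0.le p)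
    have hμ : (volume (Set.Ioc (2*r) (2*r + Real.sqrt r))).toReal = Real.sqrt r := by
      rw [Real.volume_Ioc]
      rw [show 2*r + Real.sqrt r - 2*r = Real.sqrt r by ring]
      exact ENNReal.toReal_ofReal hsqpos.le
    have hstep := setIntegral_ge_of_const_le measurableSet_Ioc measure_Ioc_lt_top.ne hlow
      ((integrable_gfun hp1 r).mono_set hsubS)
    rw [measureReal_def, hμ, smul_eq_mul, mul_comm] at hstep
    have hFge : (∫ s in Set.Ioc (2*r) (2*r + Real.sqrt r), gfun p r s) ≤ F p r :=
      setIntegral_mono_set (integrable_gfun hp1 r) (gfun_nonneg_ae p r) hsubS.eventuallyLE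
    have hrq : r ^ p * Real.sqrt r = r ^ q := by
      rw [Real.sqrt_eq_rpow, ← Real.rpow_add hr0]
    have h1r : (1+r) ^ q ≤ 2 ^ q * r ^ q := by
      have h1 : (1+r) ^ q ≤ (2*r) ^ q := Real.rpow_le_rpow (by linarith) (by linarith) hq.le
      rwa [Real.mul_rpow (by norm_num) hr0.le] at h1
    have hrqpos : (0:ℝ) < r ^ q := Real.rpow_pos_of_pos hr0 q
    calc min (c₀ / 2^q) (κ * Real.exp (-1) / 2^q) * (1+r)^q
        ≤ (κ * Real.exp (-1) / 2^q) * (2^q * r^q) := by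
          apply mul_le_mul (min_le_right _ _) h1r
            (Real.rpow_nonneg (by linarith) q)
            (div_pos (mul_pos hκpos (Real.exp_pos _)) h2q).le
      _ = κ * Real.exp (-1) * r^q := by
          field_simp
      _ = κ * Real.exp (-1) * (r^p * Real.sqrt r) := by rw [hrq]
      _ = κ * Real.exp (-1) * r^p * Real.sqrt r := by ring
      _ ≤ F p r := le_trans hstep hFge

lemma J_shift {p : ℝ} (hp : (-1:ℝ)/2 < p) (b : ℝ) (hb : 0 ≤ b) :
    ∃ c : ℝ, 0 < c ∧ ∀ r : ℝ, 0 ≤ r → c * J p r ≤ J p (r + b) := by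
  obtain ⟨C, hC, hupper⟩ := F_upper hp
  obtain ⟨cl, hcl, hlower⟩ := F_lower hp
  refine ⟨Real.exp (-b) * (cl / C), by positivity, ?_⟩
  intro r hr
  have h3 : cl * (1+r) ^ (p + 1/2) ≤ F p (r+b) := by
    have h3a : (1+r) ^ (p+1/2) ≤ (1+(r+b)) ^ (p+1/2) :=
      Real.rpow_le_rpow (by linarith) (by linarith) (by linarith)
    have h3b := hlower (r+b) (by linarith)
    nlinarith
  have h4 := hupper r hr
  have key : (cl/C) * F p r ≤ F p (r+b) := by
    have h5 : (cl/C) * F p r ≤ (cl/C) * (C * (1+r) ^ (p+1/2)) :=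
      mul_le_mul_of_nonneg_left h4 (div_pos hcl hC).le
    have h6 : (cl/C) * (C * (1+r) ^ (p+1/2)) = cl * (1+r) ^ (p+1/2) := by
      field_simp
    linarith
  rw [J_eq, J_eq, show -(r+b) = -b + -r by ring, Real.exp_add]
  calc Real.exp (-b) * (cl/C) * (Real.exp (-r) * F p r)
      = Real.exp (-b) * Real.exp (-r) * ((cl/C) * F p r) := by ring
    _ ≤ Real.exp (-b) * Real.exp (-r) * F p (r+b) :=
        mul_le_mul_of_nonneg_left key (by positivity)

end Stmt14

/-- Let `m ≥ 0` and let `U, V ⊆ ℝᵈ` satisfy `sup_{z∈U}‖z‖ < ∞`,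
`inf{‖x−y‖ : x ∈ U, y ∈ ℝᵈ∖V} > 0` and `inf{‖y‖ : y ∈ ℝᵈ∖V} > 0`. Then there is
`C₁ > 0` such that for every `x ∈ U` and `y ∈ ℝᵈ∖V`,
`C₁·Ψ(m^{1/α}‖y‖)·‖x−y‖^{d+α} ≤ Ψ(m^{1/α}‖x−y‖)·max(1, ‖y‖^{d+α})`. -/
theorem stmt_14 (d : ℕ) (hd : 1 ≤ d) (α : ℝ) (hα : 0 < α) (hα2 : α < 2)
    (m : ℝ) (hm : 0 ≤ m) (U V : Set (EuclideanSpace ℝ (Fin d)))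
    (hbdd : ∃ R : ℝ, ∀ z ∈ U, ‖z‖ ≤ R)
    (hsep : ∃ δ : ℝ, 0 < δ ∧ ∀ x ∈ U, ∀ y ∉ V, δ ≤ ‖x - y‖)
    (hsep0 : ∃ ε : ℝ, 0 < ε ∧ ∀ y ∉ V, ε ≤ ‖y‖) :
    ∃ C₁ : ℝ, 0 < C₁ ∧ ∀ x ∈ U, ∀ y ∉ V,
      C₁ * Psi d α (m ^ (1 / α) * ‖y‖) * ‖x - y‖ ^ ((d : ℝ) + α) ≤
        Psi d α (m ^ (1 / α) * ‖x - y‖) * max 1 (‖y‖ ^ ((d : ℝ) + α)) := by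
  classical
  obtain ⟨R, hR⟩ := hbdd
  obtain ⟨ε, hε, hεy⟩ := hsep0
  set p : ℝ := ((d : ℝ) + α) / 2 - 1 with hpdef
  have hdr : (1:ℝ) ≤ (d:ℝ) := by exact_mod_cast hd
  have hp : (-1:ℝ)/2 < p := by rw [hpdef]; linarith
  have hp1 : (-1:ℝ) < p := lt_trans (by norm_num : (-1:ℝ) < -1/2) hp
  have hPsi : ∀ t : ℝ, Psi d α t = Stmt14.J p t / Stmt14.J p 0 := fun t => rfl
  set a : ℝ := m ^ (1/α) with hadef
  have ha : 0 ≤ a := Real.rpow_nonneg hm _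
  set R' : ℝ := max R 0 with hR'def
  have hR'0 : (0:ℝ) ≤ R' := le_max_right R 0
  obtain ⟨c, hc, hshift⟩ := Stmt14.J_shift hp (a * R') (by positivity)
  have hdα : (0:ℝ) < (d:ℝ) + α := by linarith
  set M : ℝ := (1 + R'/ε) ^ ((d:ℝ)+α) with hMdef
  have hM1 : (1:ℝ) ≤ M := by
    apply Real.one_le_rpow _ hdα.le
    have : 0 ≤ R'/ε := div_nonneg hR'0 hε.le
    linarith
  have hM : (0:ℝ) < M := lt_of_lt_of_le one_pos hM1
  refine ⟨c / M, div_pos hc hM, ?_⟩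
  intro x hx y hy
  have hyε : ε ≤ ‖y‖ := hεy y hy
  have hy0 : (0:ℝ) < ‖y‖ := lt_of_lt_of_le hε hyε
  have hxR : ‖x‖ ≤ R' := le_trans (hR x hx) (le_max_left R 0)
  have hxy : ‖x - y‖ ≤ ‖y‖ + R' := by
    calc ‖x - y‖ ≤ ‖x‖ + ‖y‖ := norm_sub_le x y
      _ ≤ ‖y‖ + R' := by linarith
  have hxy0 : (0:ℝ) ≤ ‖x - y‖ := norm_nonneg _
  have h1 : ‖x - y‖ ≤ (1 + R'/ε) * ‖y‖ := by
    have h1a : R' ≤ (R'/ε) * ‖y‖ := by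
      rw [div_mul_eq_mul_div, le_div_iff₀ hε]
      nlinarith
    nlinarith [div_nonneg hR'0 hε.le]
  have h2 : ‖x - y‖ ^ ((d:ℝ)+α) ≤ M * ‖y‖ ^ ((d:ℝ)+α) := by
    calc ‖x - y‖ ^ ((d:ℝ)+α) ≤ ((1 + R'/ε) * ‖y‖) ^ ((d:ℝ)+α) :=
        Real.rpow_le_rpow hxy0 h1 hdα.le
      _ = M * ‖y‖ ^ ((d:ℝ)+α) := by
        rw [Real.mul_rpow (by positivity) (norm_nonneg y)]
  have hJ0 : 0 < Stmt14.J p 0 := Stmt14.J_pos hp1 0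
  have key : c * Psi d α (a * ‖y‖) ≤ Psi d α (a * ‖x - y‖) := by
    have hmono : Stmt14.J p (a * ‖y‖ + a * R') ≤ Stmt14.J p (a * ‖x - y‖) := by
      apply Stmt14.J_anti hp1 (by positivity)
      nlinarith
    have hsh := hshift (a * ‖y‖) (by positivity)
    rw [hPsi, hPsi, mul_div_assoc']
    exact div_le_div_of_nonneg_right (le_trans hsh hmono) hJ0.le
  have hPsin : 0 ≤ Psi d α (a * ‖y‖) := by
    rw [hPsi]
    exact div_nonneg (Stmt14.J_pos hp1 _).le hJ0.le
  have hmax : ‖y‖ ^ ((d:ℝ)+α) ≤ max 1 (‖y‖ ^ ((d:ℝ)+α)) := le_max_right _ _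
  have hmax0 : (0:ℝ) ≤ max 1 (‖y‖ ^ ((d:ℝ)+α)) := le_trans zero_le_one (le_max_left _ _)
  calc c / M * Psi d α (a * ‖y‖) * ‖x - y‖ ^ ((d:ℝ)+α)
      ≤ c / M * Psi d α (a * ‖y‖) * (M * ‖y‖ ^ ((d:ℝ)+α)) :=
        mul_le_mul_of_nonneg_left h2 (mul_nonneg (div_pos hc hM).le hPsin)
    _ = c * Psi d α (a * ‖y‖) * ‖y‖ ^ ((d:ℝ)+α) := by
        field_simp
    _ ≤ c * Psi d α (a * ‖y‖) * max 1 (‖y‖ ^ ((d:ℝ)+α)) :=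
        mul_le_mul_of_nonneg_left hmax (mul_nonneg hc.le hPsin)
    _ ≤ Psi d α (a * ‖x - y‖) * max 1 (‖y‖ ^ ((d:ℝ)+α)) :=
        mul_le_mul_of_nonneg_right key hmax0
end

section
/- Suppose either m > 0, or m = 0 and α ∈ (1, 2). Then for every Lipschitz function u : ℝᵈ → ℝ the function y ↦ Ψ(m^{1/α}‖y‖) · min(1, ‖y‖^{−(d+α)}) · |u(y)| belongs to L¹(ℝᵈ) with respect to Lebesgue measure. -/
open MeasureTheory

section Aux

open Real Set

lemma aux_int (b q : ℝ) (hb : 0 < b) (hq : -1 < q) :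
    IntegrableOn (fun s : ℝ => s ^ q * Real.exp (-(b * s))) (Set.Ioi 0) := by
  have := integrableOn_rpow_mul_exp_neg_mul_rpow (p := 1) hq zero_lt_one hb
  simpa [Real.rpow_one, neg_mul] using this

variable (d : ℕ) (α : ℝ)

lemma hq_gt (hα : 0 < α) : (-1 : ℝ) < ((d : ℝ) + α) / 2 - 1 := by
  have : (0:ℝ) ≤ (d:ℝ) := Nat.cast_nonneg d
  linarith

lemma Ifun_integrand_integrable (hα : 0 < α) (r : ℝ) :
    IntegrableOn (fun s : ℝ => s ^ (((d : ℝ) + α) / 2 - 1)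
      * Real.exp (-(s / 4) - r ^ 2 / s)) (Set.Ioi 0) := by
  apply Integrable.mono' ((aux_int (1/4) _ (by norm_num) (hq_gt d α hα)).congr_fun
    (fun s hs => by beta_reduce; rw [show -(1/4 * s) = -(s/4) by ring]) measurableSet_Ioi)
  · apply Measurable.aestronglyMeasurable; fun_prop
  · filter_upwards [ae_restrict_mem measurableSet_Ioi] with s hs
    have hs0 : 0 < s := hs
    rw [Real.norm_eq_abs, abs_mul, abs_of_nonneg (Real.rpow_nonneg hs0.le _),
      abs_of_nonneg (Real.exp_pos _).le]
    apply mul_le_mul_of_nonneg_left _ (Real.rpow_nonneg hs0.le _)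
    apply Real.exp_le_exp.2
    have : 0 ≤ r ^ 2 / s := div_nonneg (sq_nonneg r) hs0.le
    linarith

lemma Ifun_nonneg (r : ℝ) : 0 ≤ Ifun d α r := by
  apply setIntegral_nonneg measurableSet_Ioi
  intro s hs
  exact mul_nonneg (Real.rpow_nonneg (le_of_lt hs) _) (Real.exp_pos _).le

lemma Ifun_zero_pos (hα : 0 < α) : 0 < Ifun d α 0 := by
  rw [Ifun]
  rw [setIntegral_pos_iff_support_of_nonneg_ae]
  · apply lt_of_lt_of_le _ (measure_mono (?_ : Set.Ioi (1:ℝ) ⊆ _))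
    · simp
    · intro s hs
      have hs1 : (1:ℝ) < s := hs
      constructor
      · simp only [Function.mem_support]
        positivity
      · exact lt_trans zero_lt_one hs1
  · filter_upwards [ae_restrict_mem measurableSet_Ioi] with s hs
    exact mul_nonneg (Real.rpow_nonneg (le_of_lt hs) _) (Real.exp_pos _).le
  · exact Ifun_integrand_integrable d α hα 0

lemma Ifun_le (hα : 0 < α) (r : ℝ) :
    Ifun d α r ≤ Real.exp (-(r/2)) *
      ∫ s in Set.Ioi (0:ℝ), s ^ (((d : ℝ) + α) / 2 - 1) * Real.exp (-(1/8 * s)) := by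
  rw [← integral_const_mul]
  apply setIntegral_mono_on (Ifun_integrand_integrable d α hα r)
    ((aux_int (1/8) _ (by norm_num) (hq_gt d α hα)).const_mul _) measurableSet_Ioi
  intro s hs
  have hs0 : 0 < s := hs
  rw [show Real.exp (-(r/2)) * (s ^ (((d : ℝ) + α) / 2 - 1) * Real.exp (-(1/8*s)))
      = s ^ (((d : ℝ) + α) / 2 - 1) * (Real.exp (-(r/2)) * Real.exp (-(1/8*s))) by ring,
    ← Real.exp_add]
  apply mul_le_mul_of_nonneg_left _ (Real.rpow_nonneg hs0.le _)
  apply Real.exp_le_exp.2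
  have key : r / 2 ≤ s / 8 + r ^ 2 / s := by
    rw [← sub_nonneg]
    have h1 : s/8 + r^2/s - r/2 = (s^2/8 + r^2 - r*s/2)/s := by field_simp
    rw [h1]
    apply div_nonneg _ hs0.le
    nlinarith [sq_nonneg (s - 2*r)]
  linarith

lemma Ifun_stronglyMeasurable : StronglyMeasurable (fun r => Ifun d α r) := by
  have : Measurable (fun pr : ℝ × ℝ =>
      pr.2 ^ (((d : ℝ) + α) / 2 - 1) * Real.exp (-(pr.2 / 4) - pr.1 ^ 2 / pr.2)) := by
    fun_prop
  exact this.stronglyMeasurable.integral_prod_right'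

lemma Psi_nonneg (hα : 0 < α) (r : ℝ) : 0 ≤ Psi d α r :=
  div_nonneg (Ifun_nonneg d α r) (Ifun_zero_pos d α hα).le

lemma Psi_le (hα : 0 < α) (r : ℝ) :
    Psi d α r ≤ ((∫ s in Set.Ioi (0:ℝ), s ^ (((d : ℝ) + α) / 2 - 1) * Real.exp (-(1/8 * s)))
      / Ifun d α 0) * Real.exp (-(r/2)) := by
  rw [Psi, div_mul_eq_mul_div, div_le_div_iff_of_pos_right (Ifun_zero_pos d α hα)]
  rw [mul_comm]
  exact Ifun_le d α hα r

lemma dom0 (β : ℝ) (hβ : 1 ≤ β) (t : ℝ) (ht : 0 ≤ t) :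
    min 1 (t ^ (-β)) * (1 + t) ≤ 2 ^ β * (1 + t) ^ (-(β - 1)) := by
  have h1t : (0:ℝ) < 1 + t := by linarith
  rcases le_total t 1 with h | h
  · calc min 1 (t ^ (-β)) * (1 + t) ≤ 1 * (1 + t) := by
          apply mul_le_mul_of_nonneg_right (min_le_left _ _) h1t.le
    _ ≤ 2 := by linarith
    _ = 2 ^ β * 2 ^ (-(β - 1)) := by
          rw [← Real.rpow_add (by norm_num)]
          norm_num
    _ ≤ 2 ^ β * (1 + t) ^ (-(β - 1)) := by
          apply mul_le_mul_of_nonneg_left _ (Real.rpow_nonneg (by norm_num) _)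
          exact Real.rpow_le_rpow_of_nonpos h1t (by linarith) (by linarith)
  · have ht0 : (0:ℝ) < t := lt_of_lt_of_le zero_lt_one h
    calc min 1 (t ^ (-β)) * (1 + t) ≤ t ^ (-β) * (2 * t) := by
          apply mul_le_mul (min_le_right _ _) (by linarith)
            h1t.le (Real.rpow_nonneg ht0.le _)
    _ = 2 * t ^ (-(β - 1)) := by
          rw [show -(β - 1) = -β + 1 by ring, Real.rpow_add ht0, Real.rpow_one]; ring
    _ = 2 ^ β * (2 * t) ^ (-(β - 1)) := by
          rw [Real.mul_rpow (by norm_num) ht0.le, ← mul_assoc,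
            ← Real.rpow_add (by norm_num)]
          norm_num
    _ ≤ 2 ^ β * (1 + t) ^ (-(β - 1)) := by
          apply mul_le_mul_of_nonneg_left _ (Real.rpow_nonneg (by norm_num) _)
          exact Real.rpow_le_rpow_of_nonpos (by linarith) (by linarith) (by linarith)

lemma domE (c : ℝ) (hc : 0 < c) (n : ℕ) :
    ∃ M : ℝ, 0 ≤ M ∧ ∀ t : ℝ, 0 ≤ t →
      Real.exp (-(c * t)) * (1 + t) ≤ M * (1 + t) ^ (-(n : ℝ)) := by
  set M₁ : ℝ := max 1 (((n : ℝ) + 1) / c) with hM₁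
  have hM₁1 : 1 ≤ M₁ := le_max_left _ _
  have hM₁0 : 0 < M₁ := lt_of_lt_of_le zero_lt_one hM₁1
  refine ⟨M₁ ^ ((n : ℝ) + 1), Real.rpow_nonneg hM₁0.le _, fun t ht => ?_⟩
  have h1t : (0:ℝ) < 1 + t := by linarith
  have hn1 : (0:ℝ) < (n : ℝ) + 1 := by positivity
  have key : 1 + t ≤ M₁ * Real.exp (c * t / ((n : ℝ) + 1)) := by
    have h2 : c * t / ((n : ℝ) + 1) + 1 ≤ Real.exp (c * t / ((n : ℝ) + 1)) :=
      Real.add_one_le_exp _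
    have h3 : ((n : ℝ) + 1) / c ≤ M₁ := le_max_right _ _
    have h4 : 1 ≤ M₁ * (c / ((n : ℝ) + 1)) := by
      calc (1:ℝ) = (((n:ℝ)+1)/c) * (c / ((n:ℝ)+1)) := by field_simp
      _ ≤ M₁ * (c / ((n:ℝ)+1)) := by
          apply mul_le_mul_of_nonneg_right h3 (by positivity)
    calc 1 + t ≤ M₁ * (c * t / ((n : ℝ) + 1) + 1) := by
          have : M₁ * (c * t / ((n : ℝ) + 1)) = (M₁ * (c / ((n:ℝ)+1))) * t := by ring
          nlinarith [mul_le_mul_of_nonneg_right h4 ht]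
    _ ≤ M₁ * Real.exp (c * t / ((n : ℝ) + 1)) := by
          apply mul_le_mul_of_nonneg_left h2 hM₁0.le
  have key2 : (1 + t) ^ ((n : ℝ) + 1) ≤ M₁ ^ ((n : ℝ) + 1) * Real.exp (c * t) := by
    calc (1 + t) ^ ((n : ℝ) + 1) ≤ (M₁ * Real.exp (c * t / ((n : ℝ) + 1))) ^ ((n : ℝ) + 1) :=
          Real.rpow_le_rpow h1t.le key hn1.le
    _ = M₁ ^ ((n : ℝ) + 1) * Real.exp (c * t) := by
          rw [Real.mul_rpow hM₁0.le (Real.exp_pos _).le, ← Real.exp_mul]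
          congr 2
          field_simp
  calc Real.exp (-(c * t)) * (1 + t)
      = ((1 + t) ^ ((n : ℝ) + 1) * Real.exp (-(c * t))) * (1 + t) ^ (-(n : ℝ)) := by
        rw [mul_comm ((1+t) ^ ((n:ℝ)+1)) _, mul_assoc, ← Real.rpow_add h1t]
        norm_num
  _ ≤ (M₁ ^ ((n : ℝ) + 1) * Real.exp (c * t) * Real.exp (-(c * t))) * (1 + t) ^ (-(n : ℝ)) := by
        apply mul_le_mul_of_nonneg_right _ (Real.rpow_nonneg h1t.le _)
        apply mul_le_mul_of_nonneg_right key2 (Real.exp_pos _).le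
  _ = M₁ ^ ((n : ℝ) + 1) * (1 + t) ^ (-(n : ℝ)) := by
        rw [mul_assoc (M₁ ^ ((n:ℝ)+1)) _ _, ← Real.exp_add]
        norm_num

end Aux

/-- Suppose either `m > 0`, or `m = 0` together with `α ∈ (1,2)`.
Then for every Lipschitz `u : ℝᵈ → ℝ`, the function
`y ↦ Ψ(m^{1/α}‖y‖) · min(1, ‖y‖^{−(d+α)}) · |u(y)|` is in `L¹(ℝᵈ)`. -/
theorem stmt_16 (d : ℕ) (hd : 1 ≤ d) (α : ℝ) (hα : 0 < α) (hα2 : α < 2)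
    (m : ℝ) (hm : 0 ≤ m) (hcase : 0 < m ∨ (m = 0 ∧ 1 < α))
    (u : EuclideanSpace ℝ (Fin d) → ℝ) (K : NNReal) (hu : LipschitzWith K u) :
    Integrable (fun y : EuclideanSpace ℝ (Fin d) =>
      Psi d α (m ^ (1 / α) * ‖y‖) * min 1 (‖y‖ ^ (-((d : ℝ) + α))) * |u y|) volume := by
  set c₀ : ℝ := m ^ (1 / α) with hc₀def
  have hc₀ : 0 ≤ c₀ := Real.rpow_nonneg hm _
  set C : ℝ := ∫ s in Set.Ioi (0:ℝ), s ^ (((d : ℝ) + α) / 2 - 1) * Real.exp (-(1/8 * s))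
    with hCdef
  have hC0 : 0 ≤ C := by
    apply setIntegral_nonneg measurableSet_Ioi
    intro s hs
    exact mul_nonneg (Real.rpow_nonneg (le_of_lt hs) _) (Real.exp_pos _).le
  have hI0 : 0 < Ifun d α 0 := Ifun_zero_pos d α hα
  set A : ℝ := |u 0| + (K : ℝ) with hAdef
  have hA0 : 0 ≤ A := add_nonneg (abs_nonneg _) K.2
  have hAb : ∀ y : EuclideanSpace ℝ (Fin d), |u y| ≤ A * (1 + ‖y‖) := by
    intro y
    have h1 : |u y - u 0| ≤ (K : ℝ) * ‖y‖ := by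
      have := hu.dist_le_mul y 0
      rwa [Real.dist_eq, dist_zero_right] at this
    have h2 : |u y| ≤ |u y - u 0| + |u 0| := by
      calc |u y| = |(u y - u 0) + u 0| := by ring_nf
      _ ≤ |u y - u 0| + |u 0| := abs_add_le _ _
    have hK : (0:ℝ) ≤ K := K.2
    have hy : (0:ℝ) ≤ ‖y‖ := norm_nonneg y
    rw [hAdef]
    nlinarith [abs_nonneg (u 0)]
  -- the dominating exponent and bound
  obtain ⟨β, hβd, M, hM0, hM⟩ : ∃ β : ℝ, (d : ℝ) < β ∧ ∃ M : ℝ, 0 ≤ M ∧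
      ∀ t : ℝ, 0 ≤ t →
        Real.exp (-(c₀ * t / 2)) * (min 1 (t ^ (-((d : ℝ) + α))) * (1 + t))
          ≤ M * (1 + t) ^ (-β) := by
    rcases hcase with hm' | ⟨hm', hα1⟩
    · -- m > 0
      have hc : 0 < c₀ / 2 := by
        have : 0 < c₀ := Real.rpow_pos_of_pos hm' _
        linarith
      obtain ⟨M, hM0, hM⟩ := domE (c₀ / 2) hc (d + 1)
      refine ⟨(d : ℝ) + 1, by linarith, M, hM0, fun t ht => ?_⟩
      have h1t : (0:ℝ) < 1 + t := by linarith
      have hmin : min 1 (t ^ (-((d : ℝ) + α))) ≤ 1 := min_le_left _ _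
      have hminn : 0 ≤ min 1 (t ^ (-((d : ℝ) + α))) :=
        le_min zero_le_one (Real.rpow_nonneg ht _)
      calc Real.exp (-(c₀ * t / 2)) * (min 1 (t ^ (-((d : ℝ) + α))) * (1 + t))
          ≤ Real.exp (-(c₀ * t / 2)) * (1 * (1 + t)) := by
            apply mul_le_mul_of_nonneg_left _ (Real.exp_pos _).le
            exact mul_le_mul_of_nonneg_right hmin h1t.le
      _ = Real.exp (-(c₀ / 2 * t)) * (1 + t) := by rw [one_mul]; ring_nf
      _ ≤ M * (1 + t) ^ (-((d + 1 : ℕ) : ℝ)) := hM t ht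
      _ = M * (1 + t) ^ (-((d : ℝ) + 1)) := by push_cast; ring_nf
    · -- m = 0, 1 < α
      refine ⟨(d : ℝ) + α - 1, by linarith, 2 ^ ((d : ℝ) + α),
        Real.rpow_nonneg (by norm_num) _, fun t ht => ?_⟩
      have hc0 : c₀ = 0 := by
        rw [hc₀def, hm', Real.zero_rpow (one_div_ne_zero hα.ne')]
      rw [hc0]
      simp only [zero_mul, zero_div, neg_zero, Real.exp_zero, one_mul]
      have := dom0 ((d : ℝ) + α) (by
        have : (1:ℝ) ≤ (d:ℝ) := by exact_mod_cast hd
        linarith) t ht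
      convert this using 3
  -- measurability
  have hmeas : Measurable (fun y : EuclideanSpace ℝ (Fin d) =>
      Psi d α (c₀ * ‖y‖) * min 1 (‖y‖ ^ (-((d : ℝ) + α))) * |u y|) := by
    have h1 : Measurable fun y : EuclideanSpace ℝ (Fin d) => Psi d α (c₀ * ‖y‖) := by
      have h2 := (Ifun_stronglyMeasurable d α).measurable
      exact (h2.comp (by fun_prop : Measurable fun y : EuclideanSpace ℝ (Fin d) => c₀ * ‖y‖)).div_const _
    exact (h1.mul (by fun_prop)).mul (hu.continuous.abs.measurable)
  -- conclusion
  apply Integrable.mono' (((integrable_one_add_norm (μ := (volume : Measure (EuclideanSpace ℝ (Fin d)))) (by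
    rw [finrank_euclideanSpace_fin]; exact hβd)).const_mul (C / Ifun d α 0 * A * M)))
    hmeas.aestronglyMeasurable
  filter_upwards with y
  have hy : (0:ℝ) ≤ ‖y‖ := norm_nonneg y
  have h1y : (0:ℝ) < 1 + ‖y‖ := by linarith
  have hminn : 0 ≤ min 1 (‖y‖ ^ (-((d : ℝ) + α))) :=
    le_min zero_le_one (Real.rpow_nonneg hy _)
  have hPn : 0 ≤ Psi d α (c₀ * ‖y‖) := Psi_nonneg d α hα _
  rw [Real.norm_eq_abs, abs_of_nonneg (mul_nonneg (mul_nonneg hPn hminn) (abs_nonneg _))]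
  calc Psi d α (c₀ * ‖y‖) * min 1 (‖y‖ ^ (-((d : ℝ) + α))) * |u y|
      ≤ (C / Ifun d α 0 * Real.exp (-(c₀ * ‖y‖ / 2)))
        * (min 1 (‖y‖ ^ (-((d : ℝ) + α))) * (A * (1 + ‖y‖))) := by
        rw [mul_assoc]
        apply mul_le_mul (Psi_le d α hα _) _ (mul_nonneg hminn (abs_nonneg _))
          (mul_nonneg (div_nonneg hC0 hI0.le) (Real.exp_pos _).le)
        exact mul_le_mul_of_nonneg_left (hAb y) hminn
  _ = (C / Ifun d α 0 * A) *
        (Real.exp (-(c₀ * ‖y‖ / 2)) * (min 1 (‖y‖ ^ (-((d : ℝ) + α))) * (1 + ‖y‖))) := by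
        ring
  _ ≤ (C / Ifun d α 0 * A) * (M * (1 + ‖y‖) ^ (-β)) := by
        apply mul_le_mul_of_nonneg_left (hM ‖y‖ hy)
          (mul_nonneg (div_nonneg hC0 hI0.le) hA0)
  _ = C / Ifun d α 0 * A * M * (1 + ‖y‖) ^ (-β) := by ring
end
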